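/- arXiv:2109.09634 — 7 statements merged into one kernel-verified Lean document; each statement's English description precedes it below -/
import Mathlib

section
/- Let C be a semi-cartesian monoidal category with uniform deletion ε and let Z be an object of C. The following are equivalent: (1) there exists a morphism δ : Z → Z ⊗ Z with (id_Z ⊗ ε_Z) ∘ δ = id_Z and (ε_Z ⊗ id_Z) ∘ δ = id_Z; (2) for all objects X, Y and all morphisms f : Z → X and g : Z → Y, there exists a morphism h : Z → X ⊗ Y with π¹_{XY} ∘ h = f and π²_{XY} ∘ h = g. -/
open CategoryTheory CategoryTheory.Limits MonoidalCategory

/-- In a semi-cartesian monoidal category (unit object terminal, with uniform deletion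
`ε_X := hT.from X`), for an object `Z` the following are equivalent:
(1) there is a counital morphism `Z ⟶ Z ⊗ Z`;
(2) for all `f : Z ⟶ X`, `g : Z ⟶ Y` there is `h : Z ⟶ X ⊗ Y` with
`π¹ ∘ h = f` and `π² ∘ h = g`, where `π¹ = id_X ⊗ ε_Y` and `π² = ε_X ⊗ id_Y`
(composed with the unitors). -/
theorem stmt1 {C : Type*} [Category C] [MonoidalCategory C]
    (hT : IsTerminal (𝟙_ C)) (Z : C) :
    (∃ δ : Z ⟶ Z ⊗ Z,
        δ ≫ (𝟙 Z ⊗ₘ hT.from Z) ≫ (ρ_ Z).hom = 𝟙 Z ∧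
        δ ≫ (hT.from Z ⊗ₘ 𝟙 Z) ≫ (λ_ Z).hom = 𝟙 Z) ↔
    (∀ (X Y : C) (f : Z ⟶ X) (g : Z ⟶ Y), ∃ h : Z ⟶ X ⊗ Y,
        h ≫ (𝟙 X ⊗ₘ hT.from Y) ≫ (ρ_ X).hom = f ∧
        h ≫ (hT.from X ⊗ₘ 𝟙 Y) ≫ (λ_ Y).hom = g) := by
  constructor
  · rintro ⟨δ, h1, h2⟩ X Y f g
    refine ⟨δ ≫ (f ⊗ₘ g), ?_, ?_⟩
    · have : (f ⊗ₘ g) ≫ (𝟙 X ⊗ₘ hT.from Y) = (𝟙 Z ⊗ₘ hT.from Z) ≫ (f ⊗ₘ 𝟙 (𝟙_ C)) := by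
        rw [tensorHom_comp_tensorHom, tensorHom_comp_tensorHom]
        congr 1 <;> simp [hT.hom_ext (g ≫ hT.from Y) (hT.from Z)]
      rw [Category.assoc, reassoc_of% this]
      have : (f ⊗ₘ 𝟙 (𝟙_ C)) ≫ (ρ_ X).hom = (ρ_ Z).hom ≫ f := by simp
      rw [this, ← Category.assoc, ← Category.assoc, Category.assoc δ, h1, Category.id_comp]
    · have : (f ⊗ₘ g) ≫ (hT.from X ⊗ₘ 𝟙 Y) = (hT.from Z ⊗ₘ 𝟙 Z) ≫ (𝟙 (𝟙_ C) ⊗ₘ g) := by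
        rw [tensorHom_comp_tensorHom, tensorHom_comp_tensorHom]
        congr 1 <;> simp [hT.hom_ext (f ≫ hT.from X) (hT.from Z)]
      rw [Category.assoc, reassoc_of% this]
      have : (𝟙 (𝟙_ C) ⊗ₘ g) ≫ (λ_ Y).hom = (λ_ Z).hom ≫ g := by simp
      rw [this, ← Category.assoc, ← Category.assoc, Category.assoc δ, h2, Category.id_comp]
  · intro h
    obtain ⟨δ, hδ1, hδ2⟩ := h Z Z (𝟙 Z) (𝟙 Z)
    exact ⟨δ, hδ1, hδ2⟩
end

section
/- A semi-cartesian monoidal category C is cartesian if and only if there exists a family of morphisms Δ_X : X → X ⊗ X, natural in X, which is counital (i.e., (id_X ⊗ ε_X) ∘ Δ_X = id_X and (ε_X ⊗ id_X) ∘ Δ_X = id_X for all X) and which satisfies (π¹_{XY} ⊗ π²_{XY}) ∘ Δ_{X⊗Y} = id_{X⊗Y} for all objects X, Y. -/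
open CategoryTheory CategoryTheory.Limits MonoidalCategory

variable {C : Type*} [Category C] [MonoidalCategory C]

/-- The first canonical projection `π¹_{XY} = id_X ⊗ ε_Y : X ⊗ Y ⟶ X`
in a semi-cartesian monoidal category. -/
def pr1 (hT : IsTerminal (𝟙_ C)) (X Y : C) : X ⊗ Y ⟶ X :=
  (𝟙 X ⊗ₘ hT.from Y) ≫ (ρ_ X).hom

/-- The second canonical projection `π²_{XY} = ε_X ⊗ id_Y : X ⊗ Y ⟶ Y`. -/
def pr2 (hT : IsTerminal (𝟙_ C)) (X Y : C) : X ⊗ Y ⟶ Y :=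
  (hT.from X ⊗ₘ 𝟙 Y) ≫ (λ_ Y).hom

lemma pr1_natural (hT : IsTerminal (𝟙_ C)) {Z W X Y : C} (f : Z ⟶ X) (g : W ⟶ Y) :
    (f ⊗ₘ g) ≫ pr1 hT X Y = pr1 hT Z W ≫ f := by
  unfold pr1
  rw [← Category.assoc, tensorHom_comp_tensorHom, Category.comp_id,
    hT.hom_ext (g ≫ hT.from Y) (hT.from W)]
  calc (f ⊗ₘ hT.from W) ≫ (ρ_ X).hom
      = ((𝟙 Z ⊗ₘ hT.from W) ≫ (f ⊗ₘ 𝟙 (𝟙_ C))) ≫ (ρ_ X).hom := by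
        rw [tensorHom_comp_tensorHom, Category.comp_id, Category.id_comp]
    _ = (𝟙 Z ⊗ₘ hT.from W) ≫ (ρ_ Z).hom ≫ f := by
        rw [Category.assoc, tensorHom_id, rightUnitor_naturality]
    _ = ((𝟙 Z ⊗ₘ hT.from W) ≫ (ρ_ Z).hom) ≫ f := by rw [Category.assoc]

lemma pr2_natural (hT : IsTerminal (𝟙_ C)) {Z W X Y : C} (f : Z ⟶ X) (g : W ⟶ Y) :
    (f ⊗ₘ g) ≫ pr2 hT X Y = pr2 hT Z W ≫ g := by
  unfold pr2
  rw [← Category.assoc, tensorHom_comp_tensorHom, Category.comp_id,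
    hT.hom_ext (f ≫ hT.from X) (hT.from Z)]
  calc (hT.from Z ⊗ₘ g) ≫ (λ_ Y).hom
      = ((hT.from Z ⊗ₘ 𝟙 W) ≫ (𝟙 (𝟙_ C) ⊗ₘ g)) ≫ (λ_ Y).hom := by
        rw [tensorHom_comp_tensorHom, Category.comp_id, Category.id_comp]
    _ = (hT.from Z ⊗ₘ 𝟙 W) ≫ (λ_ W).hom ≫ g := by
        rw [Category.assoc, id_tensorHom, leftUnitor_naturality]
    _ = ((hT.from Z ⊗ₘ 𝟙 W) ≫ (λ_ W).hom) ≫ g := by rw [Category.assoc]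

/-- A semi-cartesian monoidal category is cartesian (i.e. `(X ⊗ Y, π¹, π²)` is a
binary product for all `X, Y`) if and only if there is a natural family of counital
morphisms `Δ_X : X ⟶ X ⊗ X` satisfying `(π¹_{XY} ⊗ π²_{XY}) ∘ Δ_{X⊗Y} = id_{X⊗Y}`. -/
theorem stmt2 (hT : IsTerminal (𝟙_ C)) :
    (∀ (X Y Z : C) (f : Z ⟶ X) (g : Z ⟶ Y), ∃! h : Z ⟶ X ⊗ Y,
        h ≫ pr1 hT X Y = f ∧ h ≫ pr2 hT X Y = g) ↔
    ∃ Δ : ∀ X : C, X ⟶ X ⊗ X,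
      (∀ {X Y : C} (f : X ⟶ Y), f ≫ Δ Y = Δ X ≫ (f ⊗ₘ f)) ∧
      (∀ X : C, Δ X ≫ (𝟙 X ⊗ₘ hT.from X) ≫ (ρ_ X).hom = 𝟙 X) ∧
      (∀ X : C, Δ X ≫ (hT.from X ⊗ₘ 𝟙 X) ≫ (λ_ X).hom = 𝟙 X) ∧
      (∀ X Y : C, Δ (X ⊗ Y) ≫ (pr1 hT X Y ⊗ₘ pr2 hT X Y) = 𝟙 (X ⊗ Y)) := by
  constructor
  · intro H
    choose Δ' hΔ' using fun X : C => H X X X (𝟙 X) (𝟙 X)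
    refine ⟨fun X => Δ' X, ?_, fun X => (hΔ' X).1.1, fun X => (hΔ' X).1.2, ?_⟩
    · intro X Y f
      have h1 : (f ≫ Δ' Y) ≫ pr1 hT Y Y = f := by
        rw [Category.assoc, (hΔ' Y).1.1, Category.comp_id]
      have h2 : (f ≫ Δ' Y) ≫ pr2 hT Y Y = f := by
        rw [Category.assoc, (hΔ' Y).1.2, Category.comp_id]
      have h1' : (Δ' X ≫ (f ⊗ₘ f)) ≫ pr1 hT Y Y = f := by
        rw [Category.assoc, pr1_natural, ← Category.assoc, (hΔ' X).1.1, Category.id_comp]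
      have h2' : (Δ' X ≫ (f ⊗ₘ f)) ≫ pr2 hT Y Y = f := by
        rw [Category.assoc, pr2_natural, ← Category.assoc, (hΔ' X).1.2, Category.id_comp]
      obtain ⟨h, _, hu⟩ := H Y Y X f f
      rw [hu _ ⟨h1, h2⟩, hu _ ⟨h1', h2'⟩]
    · intro X Y
      obtain ⟨h, _, hu⟩ := H X Y (X ⊗ Y) (pr1 hT X Y) (pr2 hT X Y)
      have e1 : (Δ' (X ⊗ Y) ≫ (pr1 hT X Y ⊗ₘ pr2 hT X Y)) ≫ pr1 hT X Y = pr1 hT X Y := by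
        rw [Category.assoc, pr1_natural, ← Category.assoc, (hΔ' (X ⊗ Y)).1.1,
          Category.id_comp]
      have e2 : (Δ' (X ⊗ Y) ≫ (pr1 hT X Y ⊗ₘ pr2 hT X Y)) ≫ pr2 hT X Y = pr2 hT X Y := by
        rw [Category.assoc, pr2_natural, ← Category.assoc, (hΔ' (X ⊗ Y)).1.2,
          Category.id_comp]
      rw [hu _ ⟨e1, e2⟩, hu (𝟙 (X ⊗ Y)) ⟨Category.id_comp _, Category.id_comp _⟩]
  · rintro ⟨Δ, hnat, hc1, hc2, hsp⟩ X Y Z f g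
    refine ⟨Δ Z ≫ (f ⊗ₘ g), ⟨?_, ?_⟩, ?_⟩
    · rw [Category.assoc, pr1_natural, ← Category.assoc,
        show Δ Z ≫ pr1 hT Z Z = 𝟙 Z from hc1 Z, Category.id_comp]
    · rw [Category.assoc, pr2_natural, ← Category.assoc,
        show Δ Z ≫ pr2 hT Z Z = 𝟙 Z from hc2 Z, Category.id_comp]
    · rintro h ⟨rfl, rfl⟩
      rw [← tensorHom_comp_tensorHom, ← Category.assoc, ← hnat, Category.assoc, hsp, Category.comp_id]
end

section
/- Let X and Y be comonoids in a braided monoidal category C. The braiding σ_{X,Y} : X ⊗ Y → Y ⊗ X is a morphism of comonoids (with respect to the tensor product comonoid structures on X ⊗ Y and on Y ⊗ X) if and only if σ_{Y,X} ∘ σ_{X,Y} = id_{X⊗Y}, i.e., σ_{Y,X} = σ_{X,Y}⁻¹. -/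
open CategoryTheory CategoryTheory.Limits MonoidalCategory

variable {C : Type*} [Category C] [MonoidalCategory C] [BraidedCategory C]

/-- `(X, Δ, ε)` is a comonoid: `Δ` is coassociative and counital. -/
def IsComon (X : C) (Δ : X ⟶ X ⊗ X) (ε : X ⟶ 𝟙_ C) : Prop :=
  Δ ≫ (Δ ⊗ₘ 𝟙 X) ≫ (α_ X X X).hom = Δ ≫ (𝟙 X ⊗ₘ Δ) ∧
  Δ ≫ (ε ⊗ₘ 𝟙 X) ≫ (λ_ X).hom = 𝟙 X ∧
  Δ ≫ (𝟙 X ⊗ₘ ε) ≫ (ρ_ X).hom = 𝟙 X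

/-- Comultiplication of the tensor product comonoid. -/
def tensΔ {X Y : C} (ΔX : X ⟶ X ⊗ X) (ΔY : Y ⟶ Y ⊗ Y) :
    X ⊗ Y ⟶ (X ⊗ Y) ⊗ (X ⊗ Y) :=
  (ΔX ⊗ₘ ΔY) ≫ tensorμ X X Y Y

/-- Counit of the tensor product comonoid. -/
def tensε {X Y : C} (εX : X ⟶ 𝟙_ C) (εY : Y ⟶ 𝟙_ C) : X ⊗ Y ⟶ 𝟙_ C :=
  (εX ⊗ₘ εY) ≫ (λ_ (𝟙_ C)).hom

private lemma aux1 (X Y : C) : tensorμ (𝟙_ C) Y X (𝟙_ C) ≫ ((λ_ X).hom ⊗ₘ (ρ_ Y).hom) =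
    ((λ_ Y).hom ⊗ₘ (ρ_ X).hom) ≫ (β_ Y X).hom := by
  simp only [tensorμ, MonoidalCategory.tensorHom_def]
  monoidal

private lemma aux2 (X Y : C) : tensorμ X (𝟙_ C) (𝟙_ C) Y ≫ ((ρ_ X).hom ⊗ₘ (λ_ Y).hom) =
    (ρ_ X).hom ⊗ₘ (λ_ Y).hom := by
  simp only [tensorμ, MonoidalCategory.tensorHom_def, braiding_tensorUnit_left]
  monoidal

private lemma key_bwd (X Y : C) (h : (β_ X Y).hom ≫ (β_ Y X).hom = 𝟙 (X ⊗ Y)) :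
    (β_ (X ⊗ X) (Y ⊗ Y)).hom ≫ tensorμ Y Y X X =
      tensorμ X X Y Y ≫ ((β_ X Y).hom ⊗ₘ (β_ X Y).hom) := by
  have hinv : (β_ Y X).inv = (β_ X Y).hom := by
    rw [← cancel_mono (β_ Y X).hom, Iso.inv_hom_id, h]
  haveI : IsIso (tensorδ Y Y X X) :=
    ⟨tensorμ Y Y X X, tensorδ_tensorμ Y Y X X, tensorμ_tensorδ Y Y X X⟩
  rw [← cancel_mono (tensorδ Y Y X X)]
  rw [Category.assoc, tensorμ_tensorδ, Category.comp_id]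
  simp only [tensorδ, hinv, tensorμ, MonoidalCategory.tensorHom_def,
    BraidedCategory.braiding_tensor_left_hom, BraidedCategory.braiding_tensor_right_hom]
  monoidal

set_option maxHeartbeats 1600000 in
/-- For comonoids `X, Y` in a braided monoidal category, the braiding
`σ_{X,Y} : X ⊗ Y ⟶ Y ⊗ X` is a morphism of comonoids (for the tensor product
comonoid structures) if and only if `σ_{Y,X} ∘ σ_{X,Y} = id_{X⊗Y}`. -/
theorem stmt6 (X Y : C) (ΔX : X ⟶ X ⊗ X) (εX : X ⟶ 𝟙_ C)
    (ΔY : Y ⟶ Y ⊗ Y) (εY : Y ⟶ 𝟙_ C)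
    (hX : IsComon X ΔX εX) (hY : IsComon Y ΔY εY) :
    ((β_ X Y).hom ≫ tensΔ ΔY ΔX =
        tensΔ ΔX ΔY ≫ ((β_ X Y).hom ⊗ₘ (β_ X Y).hom) ∧
      (β_ X Y).hom ≫ tensε εY εX = tensε εX εY) ↔
    (β_ X Y).hom ≫ (β_ Y X).hom = 𝟙 (X ⊗ Y) := by
  constructor
  · rintro ⟨hc, -⟩
    -- compose the comultiplication equation with the "kill" morphism
    have := congrArg (fun f => f ≫ (((εY ⊗ₘ 𝟙 X) ⊗ₘ (𝟙 Y ⊗ₘ εX)) ≫ ((λ_ X).hom ⊗ₘ (ρ_ Y).hom))) hc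
    -- simplify LHS
    have lhs_eq : ((β_ X Y).hom ≫ tensΔ ΔY ΔX) ≫
        (((εY ⊗ₘ 𝟙 X) ⊗ₘ (𝟙 Y ⊗ₘ εX)) ≫ ((λ_ X).hom ⊗ₘ (ρ_ Y).hom)) =
        (β_ X Y).hom ≫ (β_ Y X).hom := by
      calc ((β_ X Y).hom ≫ tensΔ ΔY ΔX) ≫
          (((εY ⊗ₘ 𝟙 X) ⊗ₘ (𝟙 Y ⊗ₘ εX)) ≫ ((λ_ X).hom ⊗ₘ (ρ_ Y).hom))
          = (β_ X Y).hom ≫ (ΔY ⊗ₘ ΔX) ≫ (((εY ⊗ₘ 𝟙 Y) ⊗ₘ (𝟙 X ⊗ₘ εX)) ≫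
              tensorμ (𝟙_ C) Y X (𝟙_ C)) ≫ ((λ_ X).hom ⊗ₘ (ρ_ Y).hom) := by
            rw [tensorμ_natural]; simp [tensΔ]
        _ = (β_ X Y).hom ≫ (ΔY ⊗ₘ ΔX) ≫ ((εY ⊗ₘ 𝟙 Y) ⊗ₘ (𝟙 X ⊗ₘ εX)) ≫
              ((λ_ Y).hom ⊗ₘ (ρ_ X).hom) ≫ (β_ Y X).hom := by
            rw [Category.assoc, aux1]
        _ = (β_ X Y).hom ≫ ((ΔY ≫ (εY ⊗ₘ 𝟙 Y) ≫ (λ_ Y).hom) ⊗ₘ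
              (ΔX ≫ (𝟙 X ⊗ₘ εX) ≫ (ρ_ X).hom)) ≫ (β_ Y X).hom := by
            simp only [tensorHom_comp_tensorHom_assoc]
        _ = (β_ X Y).hom ≫ (β_ Y X).hom := by
            rw [hY.2.1, hX.2.2]; simp
    have rhs_eq : (tensΔ ΔX ΔY ≫ ((β_ X Y).hom ⊗ₘ (β_ X Y).hom)) ≫
        (((εY ⊗ₘ 𝟙 X) ⊗ₘ (𝟙 Y ⊗ₘ εX)) ≫ ((λ_ X).hom ⊗ₘ (ρ_ Y).hom)) = 𝟙 (X ⊗ Y) := by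
      have step1 : ((β_ X Y).hom ⊗ₘ (β_ X Y).hom) ≫
          (((εY ⊗ₘ 𝟙 X) ⊗ₘ (𝟙 Y ⊗ₘ εX)) ≫ ((λ_ X).hom ⊗ₘ (ρ_ Y).hom)) =
          ((𝟙 X ⊗ₘ εY) ⊗ₘ (εX ⊗ₘ 𝟙 Y)) ≫ ((ρ_ X).hom ⊗ₘ (λ_ Y).hom) := by
        have c1 : (β_ X Y).hom ≫ (εY ⊗ₘ 𝟙 X) ≫ (λ_ X).hom = (𝟙 X ⊗ₘ εY) ≫ (ρ_ X).hom := by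
          rw [← BraidedCategory.braiding_naturality_assoc, braiding_tensorUnit_right]
          simp
        have c2 : (β_ X Y).hom ≫ (𝟙 Y ⊗ₘ εX) ≫ (ρ_ Y).hom = (εX ⊗ₘ 𝟙 Y) ≫ (λ_ Y).hom := by
          rw [← BraidedCategory.braiding_naturality_assoc, braiding_tensorUnit_left]
          simp
        rw [tensorHom_comp_tensorHom, tensorHom_comp_tensorHom, c1, c2, ← tensorHom_comp_tensorHom]
      calc (tensΔ ΔX ΔY ≫ ((β_ X Y).hom ⊗ₘ (β_ X Y).hom)) ≫
          (((εY ⊗ₘ 𝟙 X) ⊗ₘ (𝟙 Y ⊗ₘ εX)) ≫ ((λ_ X).hom ⊗ₘ (ρ_ Y).hom))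
          = (ΔX ⊗ₘ ΔY) ≫ tensorμ X X Y Y ≫ ((𝟙 X ⊗ₘ εY) ⊗ₘ (εX ⊗ₘ 𝟙 Y)) ≫
              ((ρ_ X).hom ⊗ₘ (λ_ Y).hom) := by
            simp only [tensΔ, Category.assoc, step1]
        _ = (ΔX ⊗ₘ ΔY) ≫ ((𝟙 X ⊗ₘ εX) ⊗ₘ (εY ⊗ₘ 𝟙 Y)) ≫ tensorμ X (𝟙_ C) (𝟙_ C) Y ≫
              ((ρ_ X).hom ⊗ₘ (λ_ Y).hom) := by
            rw [tensorμ_natural_assoc]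
        _ = (ΔX ⊗ₘ ΔY) ≫ ((𝟙 X ⊗ₘ εX) ⊗ₘ (εY ⊗ₘ 𝟙 Y)) ≫ ((ρ_ X).hom ⊗ₘ (λ_ Y).hom) := by
            rw [aux2]
        _ = (ΔX ≫ (𝟙 X ⊗ₘ εX) ≫ (ρ_ X).hom) ⊗ₘ (ΔY ≫ (εY ⊗ₘ 𝟙 Y) ≫ (λ_ Y).hom) := by
            simp only [tensorHom_comp_tensorHom]
        _ = 𝟙 (X ⊗ Y) := by rw [hX.2.2, hY.2.1]; simp
    rw [lhs_eq, rhs_eq] at this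
    exact this
  · intro h
    refine ⟨?_, ?_⟩
    · calc (β_ X Y).hom ≫ tensΔ ΔY ΔX
          = (ΔX ⊗ₘ ΔY) ≫ (β_ (X ⊗ X) (Y ⊗ Y)).hom ≫ tensorμ Y Y X X := by
            rw [tensΔ, ← BraidedCategory.braiding_naturality_assoc]
        _ = (ΔX ⊗ₘ ΔY) ≫ tensorμ X X Y Y ≫ ((β_ X Y).hom ⊗ₘ (β_ X Y).hom) := by
            rw [key_bwd X Y h]
        _ = tensΔ ΔX ΔY ≫ ((β_ X Y).hom ⊗ₘ (β_ X Y).hom) := by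
            rw [tensΔ, Category.assoc]
    · rw [tensε, tensε, ← BraidedCategory.braiding_naturality_assoc]
      simp [braiding_tensorUnit_left, ← unitors_equal]
end

section
/- Let C be a braided monoidal category, X an object of C, and Δ, δ : X → X ⊗ X two morphisms that are counital with respect to morphisms ε, ε' : X → 𝟙 respectively (i.e., (id_X ⊗ ε) ∘ Δ = id_X = (ε ⊗ id_X) ∘ Δ and similarly for (δ, ε')), and which satisfy the exchange law (δ ⊗ δ) ∘ Δ = (id_X ⊗ σ_{X,X} ⊗ id_X) ∘ (Δ ⊗ Δ) ∘ δ. Then ε = ε', Δ = δ, and Δ is coassociative and cocommutative (σ_{X,X} ∘ Δ = Δ), so (X, Δ, ε) is a cocommutative comonoid. -/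
open CategoryTheory CategoryTheory.Limits MonoidalCategory

set_option maxHeartbeats 1000000

variable {C : Type*} [Category C] [MonoidalCategory C] [BraidedCategory C]

private lemma counit_l {X Y : C} (c : X ⟶ X ⊗ X) (e : X ⟶ 𝟙_ C)
    (h : c ≫ (e ⊗ₘ 𝟙 X) ≫ (λ_ X).hom = 𝟙 X) (f : X ⟶ Y) :
    c ≫ (e ⊗ₘ f) = f ≫ (λ_ Y).inv := by
  have h' : c ≫ (e ⊗ₘ 𝟙 X) = (λ_ X).inv := by
    rw [← cancel_mono (λ_ X).hom]; simpa using h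
  calc c ≫ (e ⊗ₘ f) = c ≫ (e ≫ 𝟙 (𝟙_ C) ⊗ₘ 𝟙 X ≫ f) := by simp
    _ = (c ≫ (e ⊗ₘ 𝟙 X)) ≫ (𝟙 (𝟙_ C) ⊗ₘ f) := by rw [← tensorHom_comp_tensorHom]; simp
    _ = (λ_ X).inv ≫ (𝟙 (𝟙_ C) ⊗ₘ f) := by rw [h']
    _ = f ≫ (λ_ Y).inv := by simp

private lemma counit_r {X Y : C} (c : X ⟶ X ⊗ X) (e : X ⟶ 𝟙_ C)
    (h : c ≫ (𝟙 X ⊗ₘ e) ≫ (ρ_ X).hom = 𝟙 X) (f : X ⟶ Y) :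
    c ≫ (f ⊗ₘ e) = f ≫ (ρ_ Y).inv := by
  have h' : c ≫ (𝟙 X ⊗ₘ e) = (ρ_ X).inv := by
    rw [← cancel_mono (ρ_ X).hom]; simpa using h
  calc c ≫ (f ⊗ₘ e) = c ≫ (𝟙 X ≫ f ⊗ₘ e ≫ 𝟙 (𝟙_ C)) := by simp
    _ = (c ≫ (𝟙 X ⊗ₘ e)) ≫ (f ⊗ₘ 𝟙 (𝟙_ C)) := by rw [← tensorHom_comp_tensorHom]; simp
    _ = (ρ_ X).inv ≫ (f ⊗ₘ 𝟙 (𝟙_ C)) := by rw [h']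
    _ = f ≫ (ρ_ Y).inv := by simp

private lemma braidUnit : (β_ (𝟙_ C) (𝟙_ C)).hom = (λ_ (𝟙_ C)).hom ≫ (ρ_ (𝟙_ C)).inv := by
  rw [← braiding_rightUnitor (𝟙_ C)]; simp

private lemma braidUnitL (X : C) : (β_ (𝟙_ C) X).hom = (λ_ X).hom ≫ (ρ_ X).inv := by
  rw [← braiding_rightUnitor X]; simp

private lemma struct1 :
    (ρ_ (𝟙_ C)).inv ≫ ((λ_ (𝟙_ C)).inv ⊗ₘ (ρ_ (𝟙_ C)).inv) ≫ ((λ_ (𝟙_ C)).hom ⊗ₘ (λ_ (𝟙_ C)).hom) ≫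
      (λ_ (𝟙_ C)).hom = 𝟙 (𝟙_ C) := by
  monoidal

private lemma struct1' :
    (ρ_ (𝟙_ C)).inv ≫ ((ρ_ (𝟙_ C)).inv ⊗ₘ (λ_ (𝟙_ C)).inv) ≫ tensorμ (𝟙_ C) (𝟙_ C) (𝟙_ C) (𝟙_ C) ≫
      ((λ_ (𝟙_ C)).hom ⊗ₘ (λ_ (𝟙_ C)).hom) ≫ (λ_ (𝟙_ C)).hom = 𝟙 (𝟙_ C) := by
  rw [tensorμ, braidUnit]; monoidal

private lemma struct2 (X : C) :
    ((ρ_ X).inv ⊗ₘ (λ_ X).inv) ≫ tensorμ X (𝟙_ C) (𝟙_ C) X ≫ ((ρ_ X).hom ⊗ₘ (λ_ X).hom) = 𝟙 (X ⊗ X) := by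
  rw [tensorμ, braidUnit]; monoidal

private lemma struct3 (X : C) :
    ((λ_ X).inv ⊗ₘ (ρ_ X).inv) ≫ tensorμ (𝟙_ C) X X (𝟙_ C) ≫ ((λ_ X).hom ⊗ₘ (ρ_ X).hom) = (β_ X X).hom := by
  simp [tensorμ]
  monoidal

private lemma struct4 (X : C) :
    ((ρ_ X).inv ⊗ₘ 𝟙 (X ⊗ X)) ≫ tensorμ X (𝟙_ C) X X ≫ (𝟙 (X ⊗ X) ⊗ₘ (λ_ X).hom) = (α_ X X X).inv := by
  rw [tensorμ, braidUnitL]; monoidal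

private lemma tensorμ_nat_assoc {X₁ X₂ Y₁ Y₂ U₁ U₂ V₁ V₂ : C} (f₁ : X₁ ⟶ Y₁) (f₂ : X₂ ⟶ Y₂)
    (g₁ : U₁ ⟶ V₁) (g₂ : U₂ ⟶ V₂) {Z : C} (h : (Y₁ ⊗ V₁) ⊗ Y₂ ⊗ V₂ ⟶ Z) :
    tensorμ X₁ X₂ U₁ U₂ ≫ ((f₁ ⊗ₘ g₁) ⊗ₘ f₂ ⊗ₘ g₂) ≫ h = ((f₁ ⊗ₘ f₂) ⊗ₘ g₁ ⊗ₘ g₂) ≫ tensorμ Y₁ Y₂ V₁ V₂ ≫ h := by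
  rw [← Category.assoc, ← tensorμ_natural, Category.assoc]

/-- Hilton–Eckmann argument: if `Δ, δ : X ⟶ X ⊗ X` are counital with counits
`ε, ε'` respectively and satisfy the exchange law
`(δ ⊗ δ) ∘ Δ = (id ⊗ σ_{X,X} ⊗ id) ∘ (Δ ⊗ Δ) ∘ δ`, then `ε = ε'`, `Δ = δ`, and `Δ` is
coassociative and cocommutative, so `(X, Δ, ε)` is a cocommutative comonoid. -/
theorem stmt7 (X : C) (Δ δ : X ⟶ X ⊗ X) (ε ε' : X ⟶ 𝟙_ C)
    (hΔl : Δ ≫ (ε ⊗ₘ 𝟙 X) ≫ (λ_ X).hom = 𝟙 X)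
    (hΔr : Δ ≫ (𝟙 X ⊗ₘ ε) ≫ (ρ_ X).hom = 𝟙 X)
    (hδl : δ ≫ (ε' ⊗ₘ 𝟙 X) ≫ (λ_ X).hom = 𝟙 X)
    (hδr : δ ≫ (𝟙 X ⊗ₘ ε') ≫ (ρ_ X).hom = 𝟙 X)
    (hexchange : Δ ≫ (δ ⊗ₘ δ) = δ ≫ (Δ ⊗ₘ Δ) ≫ tensorμ X X X X) :
    ε = ε' ∧ Δ = δ ∧
    Δ ≫ (Δ ⊗ₘ 𝟙 X) ≫ (α_ X X X).hom = Δ ≫ (𝟙 X ⊗ₘ Δ) ∧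
    Δ ≫ (β_ X X).hom = Δ := by
  have hε : ε = ε' := by
    have hL : Δ ≫ (δ ⊗ₘ δ) ≫ ((ε' ⊗ₘ ε) ⊗ₘ ε ⊗ₘ ε') ≫ ((λ_ (𝟙_ C)).hom ⊗ₘ (λ_ (𝟙_ C)).hom) ≫
        (λ_ (𝟙_ C)).hom = ε := by
      rw [tensorHom_comp_tensorHom_assoc, counit_l δ ε' hδl ε, counit_r δ ε' hδr ε, ← tensorHom_comp_tensorHom_assoc,
        reassoc_of% (counit_r Δ ε hΔr ε), struct1, Category.comp_id]
    have hR : δ ≫ (Δ ⊗ₘ Δ) ≫ tensorμ X X X X ≫ ((ε' ⊗ₘ ε) ⊗ₘ ε ⊗ₘ ε') ≫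
        ((λ_ (𝟙_ C)).hom ⊗ₘ (λ_ (𝟙_ C)).hom) ≫ (λ_ (𝟙_ C)).hom = ε' := by
      rw [tensorμ_nat_assoc, tensorHom_comp_tensorHom_assoc, counit_r Δ ε hΔr ε', counit_l Δ ε hΔl ε',
        ← tensorHom_comp_tensorHom_assoc, reassoc_of% (counit_r δ ε' hδr ε'), struct1', Category.comp_id]
    exact hL.symm.trans (((reassoc_of% hexchange) _).trans hR)
  rw [← hε] at hδl hδr
  have hΔδ : Δ = δ := by
    have hL : Δ ≫ (δ ⊗ₘ δ) ≫ ((𝟙 X ⊗ₘ ε) ⊗ₘ ε ⊗ₘ 𝟙 X) ≫ ((ρ_ X).hom ⊗ₘ (λ_ X).hom) = Δ := by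
      rw [tensorHom_comp_tensorHom_assoc, counit_r δ ε hδr (𝟙 X), counit_l δ ε hδl (𝟙 X)]
      simp [tensorHom_comp_tensorHom_assoc]
    have hR : δ ≫ (Δ ⊗ₘ Δ) ≫ tensorμ X X X X ≫ ((𝟙 X ⊗ₘ ε) ⊗ₘ ε ⊗ₘ 𝟙 X) ≫
        ((ρ_ X).hom ⊗ₘ (λ_ X).hom) = δ := by
      rw [tensorμ_nat_assoc, tensorHom_comp_tensorHom_assoc, counit_r Δ ε hΔr (𝟙 X), counit_l Δ ε hΔl (𝟙 X),
        ← tensorHom_comp_tensorHom_assoc]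
      simp only [id_tensorHom_id, Category.id_comp]
      rw [struct2, Category.comp_id]
    exact hL.symm.trans (((reassoc_of% hexchange) _).trans hR)
  rw [← hΔδ] at hexchange
  have hcomm : Δ ≫ (β_ X X).hom = Δ := by
    have hL : Δ ≫ (Δ ⊗ₘ Δ) ≫ ((ε ⊗ₘ 𝟙 X) ⊗ₘ 𝟙 X ⊗ₘ ε) ≫ ((λ_ X).hom ⊗ₘ (ρ_ X).hom) = Δ := by
      rw [tensorHom_comp_tensorHom_assoc, counit_l Δ ε hΔl (𝟙 X), counit_r Δ ε hΔr (𝟙 X)]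
      simp [tensorHom_comp_tensorHom_assoc]
    have hR : Δ ≫ (Δ ⊗ₘ Δ) ≫ tensorμ X X X X ≫ ((ε ⊗ₘ 𝟙 X) ⊗ₘ 𝟙 X ⊗ₘ ε) ≫
        ((λ_ X).hom ⊗ₘ (ρ_ X).hom) = Δ ≫ (β_ X X).hom := by
      rw [tensorμ_nat_assoc, tensorHom_comp_tensorHom_assoc, counit_l Δ ε hΔl (𝟙 X), counit_r Δ ε hΔr (𝟙 X),
        ← tensorHom_comp_tensorHom_assoc]
      simp only [id_tensorHom_id, Category.id_comp]
      rw [struct3]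
    exact hR.symm.trans (((reassoc_of% hexchange) _).symm.trans hL)
  have hco : Δ ≫ (Δ ⊗ₘ 𝟙 X) = Δ ≫ (𝟙 X ⊗ₘ Δ) ≫ (α_ X X X).inv := by
    have hL : Δ ≫ (Δ ⊗ₘ Δ) ≫ ((𝟙 X ⊗ₘ 𝟙 X) ⊗ₘ ε ⊗ₘ 𝟙 X) ≫ (𝟙 (X ⊗ X) ⊗ₘ (λ_ X).hom) =
        Δ ≫ (Δ ⊗ₘ 𝟙 X) := by
      rw [tensorHom_comp_tensorHom_assoc, counit_l Δ ε hΔl (𝟙 X), id_tensorHom_id, Category.comp_id,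
        Category.id_comp, tensorHom_comp_tensorHom]
      simp
    have hR : Δ ≫ (Δ ⊗ₘ Δ) ≫ tensorμ X X X X ≫ ((𝟙 X ⊗ₘ 𝟙 X) ⊗ₘ ε ⊗ₘ 𝟙 X) ≫
        (𝟙 (X ⊗ X) ⊗ₘ (λ_ X).hom) = Δ ≫ (𝟙 X ⊗ₘ Δ) ≫ (α_ X X X).inv := by
      rw [tensorμ_nat_assoc, tensorHom_comp_tensorHom_assoc, counit_r Δ ε hΔr (𝟙 X), id_tensorHom_id,
        ← tensorHom_comp_tensorHom_assoc (𝟙 X) Δ (ρ_ X).inv (𝟙 (X ⊗ X)), struct4]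
      try simp
    exact hL.symm.trans (((reassoc_of% hexchange) _).trans hR)
  refine ⟨hε, hΔδ, ?_, hcomm⟩
  rw [reassoc_of% hco]
  try simp
end

section
/- Let X and Y be cocommutative comonoids in a braided monoidal category C. The tensor product comonoid X ⊗ Y is cocommutative if and only if σ_{Y,X} ∘ σ_{X,Y} = id_{X⊗Y}, i.e., σ_{Y,X} = σ_{X,Y}⁻¹. -/
open CategoryTheory CategoryTheory.Limits MonoidalCategory

variable {C : Type*} [Category C] [MonoidalCategory C] [BraidedCategory C]

/-- If `σ_{Y,X} ∘ σ_{X,Y} = id`, the braiding on `(X ⊗ Y) ⊗ (X ⊗ Y)` interacts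
with `tensorμ` as in a symmetric category. -/
private lemma keyBraid (X Y : C) (h : (β_ X Y).hom ≫ (β_ Y X).hom = 𝟙 (X ⊗ Y)) :
    tensorμ X X Y Y ≫ (β_ (X ⊗ Y) (X ⊗ Y)).hom
      = ((β_ X X).hom ⊗ₘ (β_ Y Y).hom) ≫ tensorμ X X Y Y := by
  simp only [tensorμ, Category.assoc, BraidedCategory.braiding_naturality,
    BraidedCategory.braiding_tensor_right_hom, BraidedCategory.braiding_tensor_left_hom,
    comp_whiskerRight, whisker_assoc, MonoidalCategory.whiskerLeft_comp, pentagon_assoc,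
    pentagon_inv_hom_hom_hom_inv_assoc, Iso.inv_hom_id_assoc, whiskerLeft_hom_inv_assoc]
  slice_lhs 3 4 =>
    rw [← MonoidalCategory.whiskerLeft_comp, ← comp_whiskerRight, h]
  simp only [id_whiskerRight, MonoidalCategory.whiskerLeft_id, Category.id_comp, Category.assoc]
  slice_lhs 1 4 =>
    rw [show (α_ X X (Y ⊗ Y)).hom ≫ X ◁ (α_ X Y Y).inv ≫ (α_ X (X ⊗ Y) Y).inv ≫
        (α_ X X Y).inv ▷ Y = (α_ (X ⊗ X) Y Y).inv by monoidal]
  slice_lhs 1 2 => rw [← associator_inv_naturality_left]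
  slice_lhs 2 3 => rw [Iso.inv_hom_id]
  rw [Category.id_comp]
  slice_lhs 2 3 => rw [← associator_naturality_right]
  slice_lhs 1 2 => rw [← MonoidalCategory.tensorHom_def]
  simp only [Category.assoc]

private lemma unitμA (X Y : C) :
    ((ρ_ X).inv ⊗ₘ (λ_ Y).inv) ≫ tensorμ X (𝟙_ C) (𝟙_ C) Y ≫ ((ρ_ X).hom ⊗ₘ (λ_ Y).hom)
      = 𝟙 (X ⊗ Y) := by
  simp only [tensorμ, braiding_tensorUnit_left]
  monoidal

private lemma unitμB (X Y : C) :
    ((λ_ X).inv ⊗ₘ (ρ_ Y).inv) ≫ tensorμ (𝟙_ C) X Y (𝟙_ C) ≫ ((λ_ Y).hom ⊗ₘ (ρ_ X).hom)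
      = (β_ X Y).hom := by
  simp only [tensorμ]
  rw [show 𝟙_ C ◁ (β_ X Y).hom ▷ 𝟙_ C =
      ((λ_ ((X ⊗ Y) ⊗ 𝟙_ C)).hom ≫ (ρ_ (X ⊗ Y)).hom) ≫ (β_ X Y).hom ≫
        ((ρ_ (Y ⊗ X)).inv ≫ (λ_ ((Y ⊗ X) ⊗ 𝟙_ C)).inv) by simp; monoidal]
  monoidal

set_option maxHeartbeats 1000000 in
private lemma claimA (X Y : C) (ΔX : X ⟶ X ⊗ X) (εX : X ⟶ 𝟙_ C)
    (ΔY : Y ⟶ Y ⊗ Y) (εY : Y ⟶ 𝟙_ C)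
    (counitXr : ΔX ≫ (𝟙 X ⊗ₘ εX) = (ρ_ X).inv)
    (counitYl : ΔY ≫ (εY ⊗ₘ 𝟙 Y) = (λ_ Y).inv) :
    tensΔ ΔX ΔY ≫ ((𝟙 X ⊗ₘ εY) ⊗ₘ (εX ⊗ₘ 𝟙 Y)) ≫ ((ρ_ X).hom ⊗ₘ (λ_ Y).hom)
      = 𝟙 (X ⊗ Y) := by
  have h1 : ((ΔX ⊗ₘ ΔY) ≫ tensorμ X X Y Y) ≫ ((𝟙 X ⊗ₘ εY) ⊗ₘ (εX ⊗ₘ 𝟙 Y))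
      = ((ρ_ X).inv ⊗ₘ (λ_ Y).inv) ≫ tensorμ X (𝟙_ C) (𝟙_ C) Y := by
    rw [Category.assoc, ← tensorμ_natural, ← Category.assoc, tensorHom_comp_tensorHom,
      counitXr, counitYl]
  rw [tensΔ, ← Category.assoc, h1, Category.assoc, unitμA]

set_option maxHeartbeats 1000000 in
private lemma claimB (X Y : C) (ΔX : X ⟶ X ⊗ X) (εX : X ⟶ 𝟙_ C)
    (ΔY : Y ⟶ Y ⊗ Y) (εY : Y ⟶ 𝟙_ C)
    (counitXl : ΔX ≫ (εX ⊗ₘ 𝟙 X) = (λ_ X).inv)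
    (counitYr : ΔY ≫ (𝟙 Y ⊗ₘ εY) = (ρ_ Y).inv) :
    tensΔ ΔX ΔY ≫ (β_ (X ⊗ Y) (X ⊗ Y)).hom ≫
        ((𝟙 X ⊗ₘ εY) ⊗ₘ (εX ⊗ₘ 𝟙 Y)) ≫ ((ρ_ X).hom ⊗ₘ (λ_ Y).hom)
      = (β_ X Y).hom ≫ (β_ Y X).hom := by
  have h0 : (β_ (X ⊗ Y) (X ⊗ Y)).hom ≫ ((𝟙 X ⊗ₘ εY) ⊗ₘ (εX ⊗ₘ 𝟙 Y)) ≫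
        ((ρ_ X).hom ⊗ₘ (λ_ Y).hom)
      = ((εX ⊗ₘ 𝟙 Y) ⊗ₘ (𝟙 X ⊗ₘ εY)) ≫ (((λ_ Y).hom ⊗ₘ (ρ_ X).hom) ≫ (β_ Y X).hom) := by
    rw [← BraidedCategory.braiding_naturality_assoc, ← BraidedCategory.braiding_naturality]
  have h1 : ((ΔX ⊗ₘ ΔY) ≫ tensorμ X X Y Y) ≫ ((εX ⊗ₘ 𝟙 Y) ⊗ₘ (𝟙 X ⊗ₘ εY))
      = ((λ_ X).inv ⊗ₘ (ρ_ Y).inv) ≫ tensorμ (𝟙_ C) X Y (𝟙_ C) := by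
    rw [Category.assoc, ← tensorμ_natural, ← Category.assoc, tensorHom_comp_tensorHom,
      counitXl, counitYr]
  rw [tensΔ, h0]
  slice_lhs 1 3 => rw [← Category.assoc, h1]
  simp only [Category.assoc]
  rw [← Category.assoc, ← Category.assoc, Category.assoc ((λ_ X).inv ⊗ₘ (ρ_ Y).inv), unitμB]

/-- For cocommutative comonoids `X, Y` in a braided monoidal category, the tensor
product comonoid `X ⊗ Y` is cocommutative if and only if
`σ_{Y,X} ∘ σ_{X,Y} = id_{X⊗Y}`, i.e. `σ_{Y,X} = σ_{X,Y}⁻¹`. -/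
theorem stmt11 (X Y : C) (ΔX : X ⟶ X ⊗ X) (εX : X ⟶ 𝟙_ C)
    (ΔY : Y ⟶ Y ⊗ Y) (εY : Y ⟶ 𝟙_ C)
    (hX : IsComon X ΔX εX) (hY : IsComon Y ΔY εY)
    (hXc : ΔX ≫ (β_ X X).hom = ΔX) (hYc : ΔY ≫ (β_ Y Y).hom = ΔY) :
    tensΔ ΔX ΔY ≫ (β_ (X ⊗ Y) (X ⊗ Y)).hom = tensΔ ΔX ΔY ↔
    (β_ X Y).hom ≫ (β_ Y X).hom = 𝟙 (X ⊗ Y) := by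
  have counitXr : ΔX ≫ (𝟙 X ⊗ₘ εX) = (ρ_ X).inv :=
    (Iso.comp_hom_eq_id (ρ_ X)).mp (by rw [Category.assoc]; exact hX.2.2)
  have counitXl : ΔX ≫ (εX ⊗ₘ 𝟙 X) = (λ_ X).inv :=
    (Iso.comp_hom_eq_id (λ_ X)).mp (by rw [Category.assoc]; exact hX.2.1)
  have counitYr : ΔY ≫ (𝟙 Y ⊗ₘ εY) = (ρ_ Y).inv :=
    (Iso.comp_hom_eq_id (ρ_ Y)).mp (by rw [Category.assoc]; exact hY.2.2)
  have counitYl : ΔY ≫ (εY ⊗ₘ 𝟙 Y) = (λ_ Y).inv :=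
    (Iso.comp_hom_eq_id (λ_ Y)).mp (by rw [Category.assoc]; exact hY.2.1)
  constructor
  · intro E
    have cB := claimB X Y ΔX εX ΔY εY counitXl counitYr
    rw [← Category.assoc, E] at cB
    rw [← cB]
    exact claimA X Y ΔX εX ΔY εY counitXr counitYl
  · intro h
    rw [tensΔ, Category.assoc, keyBraid X Y h, ← Category.assoc, tensorHom_comp_tensorHom, hXc, hYc]
end

section
/- Let R be a commutative ring and H a Hopf algebra over R, with comultiplication Δ : H → H ⊗_R H and multiplication μ : H ⊗_R H → H. If the R-linear map μ ∘ Δ : H → H (in Sweedler notation, a ↦ a₍₁₎a₍₂₎) is multiplicative, i.e., (μ ∘ Δ)(ab) = (μ ∘ Δ)(a) · (μ ∘ Δ)(b) for all a, b ∈ H, then H is commutative: ab = ba for all a, b ∈ H. -/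
open scoped TensorProduct
open Coalgebra HopfAlgebra TensorProduct

suppress_compilation

section aux
variable {R H : Type*} [CommRing R] [Ring H] [HopfAlgebra R H]

lemma mulcomul_repr {x : H} {ι : Type*} (s : Repr R x ι) :
    LinearMap.mul' R H (comul (R := R) x) = ∑ j ∈ s.index, s.left j * s.right j := by
  rw [← s.eq, map_sum]
  simp [LinearMap.mul'_apply]

lemma sum_counit_smul_right {a : H} {ι : Type*} (r : Repr R a ι) :
    ∑ i ∈ r.index, counit (R := R) (r.left i) • r.right i = a := by
  have h := sum_counit_tmul_eq r
  apply_fun TensorProduct.lid R H at h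
  simp only [map_sum, TensorProduct.lid_tmul, one_smul] at h
  exact h

lemma sum_counit_smul_left {a : H} {ι : Type*} (r : Repr R a ι) :
    ∑ i ∈ r.index, counit (R := R) (r.right i) • r.left i = a := by
  have h := sum_tmul_counit_eq r
  apply_fun TensorProduct.rid R H at h
  simp only [map_sum, TensorProduct.rid_tmul, one_smul] at h
  exact h

lemma L1 {a : H} {ι : Type*} (r : Repr R a ι) :
    ∑ i ∈ r.index,
      antipode (R := R) (r.left i) * LinearMap.mul' R H (comul (R := R) (r.right i)) = a := by
  set a₁ : ∀ i, Repr R (r.left i) (H × H) := fun i => ℛ R (r.left i) with ha₁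
  set a₂ : ∀ i, Repr R (r.right i) (H × H) := fun i => ℛ R (r.right i) with ha₂
  have h := sum_tmul_tmul_eq r a₁ a₂
  apply_fun (LinearMap.mul' R H ∘ₗ
    TensorProduct.map (antipode (R := R)) (LinearMap.mul' R H)) at h
  simp only [map_sum, LinearMap.coe_comp, Function.comp_apply, TensorProduct.map_tmul,
    LinearMap.mul'_apply] at h
  calc ∑ i ∈ r.index,
        antipode (R := R) (r.left i) * LinearMap.mul' R H (comul (R := R) (r.right i))
      = ∑ i ∈ r.index, ∑ j ∈ (a₂ i).index,
          antipode (R := R) (r.left i) * ((a₂ i).left j * (a₂ i).right j) := by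
        refine Finset.sum_congr rfl fun i _ => ?_
        rw [mulcomul_repr (a₂ i), Finset.mul_sum]
    _ = ∑ i ∈ r.index, ∑ j ∈ (a₁ i).index,
          antipode (R := R) ((a₁ i).left j) * ((a₁ i).right j * r.right i) := h.symm
    _ = ∑ i ∈ r.index,
          (∑ j ∈ (a₁ i).index, antipode (R := R) ((a₁ i).left j) * (a₁ i).right j)
            * r.right i := by
        refine Finset.sum_congr rfl fun i _ => ?_
        rw [Finset.sum_mul]
        exact Finset.sum_congr rfl fun j _ => (mul_assoc _ _ _).symm
    _ = ∑ i ∈ r.index, counit (R := R) (r.left i) • r.right i := by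
        refine Finset.sum_congr rfl fun i _ => ?_
        rw [sum_antipode_mul_eq_algebraMap_counit (a₁ i), ← Algebra.smul_def]
    _ = a := sum_counit_smul_right r

lemma L2 {a : H} {ι : Type*} (r : Repr R a ι) :
    ∑ i ∈ r.index,
      LinearMap.mul' R H (comul (R := R) (r.left i)) * antipode (R := R) (r.right i) = a := by
  set a₁ : ∀ i, Repr R (r.left i) (H × H) := fun i => ℛ R (r.left i) with ha₁
  set a₂ : ∀ i, Repr R (r.right i) (H × H) := fun i => ℛ R (r.right i) with ha₂
  have h := sum_tmul_tmul_eq r a₁ a₂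
  apply_fun (LinearMap.mul' R H ∘ₗ TensorProduct.map LinearMap.id
    (LinearMap.mul' R H ∘ₗ TensorProduct.map LinearMap.id (antipode (R := R)))) at h
  simp only [map_sum, LinearMap.coe_comp, Function.comp_apply, TensorProduct.map_tmul,
    LinearMap.mul'_apply, LinearMap.id_coe, id_eq] at h
  calc ∑ i ∈ r.index,
        LinearMap.mul' R H (comul (R := R) (r.left i)) * antipode (R := R) (r.right i)
      = ∑ i ∈ r.index, ∑ j ∈ (a₁ i).index,
          (a₁ i).left j * ((a₁ i).right j * antipode (R := R) (r.right i)) := by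
        refine Finset.sum_congr rfl fun i _ => ?_
        rw [mulcomul_repr (a₁ i), Finset.sum_mul]
        exact Finset.sum_congr rfl fun j _ => mul_assoc _ _ _
    _ = ∑ i ∈ r.index, ∑ j ∈ (a₂ i).index,
          r.left i * ((a₂ i).left j * antipode (R := R) ((a₂ i).right j)) := h
    _ = ∑ i ∈ r.index, counit (R := R) (r.right i) • r.left i := by
        refine Finset.sum_congr rfl fun i _ => ?_
        rw [← Finset.mul_sum, sum_mul_antipode_eq_algebraMap_counit (a₂ i), ← Algebra.commutes,
          ← Algebra.smul_def]
    _ = a := sum_counit_smul_left r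

end aux
section aux2
variable {R H : Type*} [CommRing R] [Ring H] [HopfAlgebra R H]

lemma sum_counit_smul_right' {a : H} {ι : Type*} (r : Repr R a ι) :
    ∑ i ∈ r.index, counit (R := R) (r.left i) • r.right i = a := by
  have h := sum_counit_tmul_eq r
  apply_fun TensorProduct.lid R H at h
  simp only [map_sum, TensorProduct.lid_tmul, one_smul] at h
  exact h

lemma sum_counit_smul_left' {a : H} {ι : Type*} (r : Repr R a ι) :
    ∑ i ∈ r.index, counit (R := R) (r.right i) • r.left i = a := by
  have h := sum_tmul_counit_eq r
  apply_fun TensorProduct.rid R H at h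
  simp only [map_sum, TensorProduct.rid_tmul, one_smul] at h
  exact h

lemma claimA_s14 {a : H} {ι κ : Type*} (r : Repr R a ι) (a₂ : ∀ i, Repr R (r.right i) κ) :
    ∑ i ∈ r.index, ∑ k ∈ (a₂ i).index,
      (antipode (R := R) (r.left i) * (a₂ i).left k) ⊗ₜ[R] (a₂ i).right k
      = (1 : H) ⊗ₜ[R] a := by
  set a₁ : ∀ i, Repr R (r.left i) (H × H) := fun i => ℛ R (r.left i) with ha₁
  have h := sum_tmul_tmul_eq r a₁ a₂
  apply_fun (LinearMap.rTensor H (LinearMap.mul' R H ∘ₗ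
      TensorProduct.map (antipode (R := R)) LinearMap.id) ∘ₗ
      ((TensorProduct.assoc R H H H).symm : H ⊗[R] (H ⊗[R] H) ≃ₗ[R] (H ⊗[R] H) ⊗[R] H).toLinearMap)
    at h
  simp only [map_sum, LinearMap.coe_comp, LinearEquiv.coe_coe, Function.comp_apply,
    TensorProduct.assoc_symm_tmul, LinearMap.rTensor_tmul, TensorProduct.map_tmul,
    LinearMap.mul'_apply, LinearMap.id_coe, id_eq] at h
  rw [← h]
  calc ∑ i ∈ r.index, ∑ j ∈ (a₁ i).index,
        (antipode (R := R) ((a₁ i).left j) * (a₁ i).right j) ⊗ₜ[R] r.right i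
      = ∑ i ∈ r.index,
          (∑ j ∈ (a₁ i).index, antipode (R := R) ((a₁ i).left j) * (a₁ i).right j)
            ⊗ₜ[R] r.right i := by
        exact Finset.sum_congr rfl fun i _ => (TensorProduct.sum_tmul _ _ _).symm
    _ = ∑ i ∈ r.index, (1 : H) ⊗ₜ[R] (counit (R := R) (r.left i) • r.right i) := by
        refine Finset.sum_congr rfl fun i _ => ?_
        rw [sum_antipode_mul_eq_algebraMap_counit (a₁ i), Algebra.algebraMap_eq_smul_one, smul_tmul]
    _ = (1 : H) ⊗ₜ[R] a := by
        rw [← TensorProduct.tmul_sum, sum_counit_smul_right']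

lemma claimB_s14 {b : H} {ι κ : Type*} (r : Repr R b ι) (b₁ : ∀ i, Repr R (r.left i) κ) :
    ∑ j ∈ r.index, ∑ l ∈ (b₁ j).index,
      (b₁ j).left l ⊗ₜ[R] ((b₁ j).right l * antipode (R := R) (r.right j))
      = b ⊗ₜ[R] (1 : H) := by
  set b₂ : ∀ i, Repr R (r.right i) (H × H) := fun i => ℛ R (r.right i) with hb₂
  have h := sum_tmul_tmul_eq r b₁ b₂
  apply_fun (LinearMap.lTensor H (LinearMap.mul' R H ∘ₗ
      TensorProduct.map LinearMap.id (antipode (R := R)))) at h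
  simp only [map_sum, LinearMap.lTensor_tmul, LinearMap.coe_comp, Function.comp_apply,
    TensorProduct.map_tmul, LinearMap.mul'_apply, LinearMap.id_coe, id_eq] at h
  rw [h]
  calc ∑ i ∈ r.index, ∑ k ∈ (b₂ i).index,
        r.left i ⊗ₜ[R] ((b₂ i).left k * antipode (R := R) ((b₂ i).right k))
      = ∑ i ∈ r.index,
          r.left i ⊗ₜ[R] (∑ k ∈ (b₂ i).index,
            (b₂ i).left k * antipode (R := R) ((b₂ i).right k)) := by
        exact Finset.sum_congr rfl fun i _ => (TensorProduct.tmul_sum _ _ _).symm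
    _ = ∑ i ∈ r.index, (counit (R := R) (r.right i) • r.left i) ⊗ₜ[R] (1 : H) := by
        refine Finset.sum_congr rfl fun i _ => ?_
        rw [sum_mul_antipode_eq_algebraMap_counit (b₂ i), Algebra.algebraMap_eq_smul_one, tmul_smul, smul_tmul']
    _ = b ⊗ₜ[R] (1 : H) := by
        rw [← TensorProduct.sum_tmul, sum_counit_smul_left']

end aux2
section aux3
variable (R H : Type*) [CommRing R] [Ring H] [HopfAlgebra R H]

def stmt14f : H ⊗[R] H →ₗ[R] H ⊗[R] H →ₗ[R] H :=
  TensorProduct.lift <| LinearMap.mk₂ R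
    (fun u v => TensorProduct.lift <| LinearMap.mk₂ R (fun p q => u * p * (v * q))
      (fun _ _ _ => by simp [mul_add, add_mul])
      (fun _ _ _ => by simp [mul_smul_comm, smul_mul_assoc])
      (fun _ _ _ => by simp [mul_add, add_mul])
      (fun _ _ _ => by simp [mul_smul_comm, smul_mul_assoc]))
    (fun _ _ _ => by ext p q; simp [mul_add, add_mul])
    (fun _ _ _ => by ext p q; simp [mul_smul_comm, smul_mul_assoc])
    (fun _ _ _ => by ext p q; simp [mul_add, add_mul])
    (fun _ _ _ => by ext p q; simp [mul_smul_comm, smul_mul_assoc, mul_add, add_mul])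

@[simp] lemma stmt14f_apply (u v p q : H) :
    stmt14f R H (u ⊗ₜ v) (p ⊗ₜ q) = u * p * (v * q) := rfl

variable {R H}

lemma Texp (x y : H) {ι κ : Type*} (sx : Repr R x ι) (sy : Repr R y κ) :
    LinearMap.mul' R H (comul (R := R) (x * y)) =
      ∑ k ∈ sx.index, ∑ l ∈ sy.index,
        (sx.left k * sy.left l) * (sx.right k * sy.right l) := by
  rw [Bialgebra.comul_mul, ← sx.eq, ← sy.eq, Finset.sum_mul_sum]
  simp only [Algebra.TensorProduct.tmul_mul_tmul, map_sum, LinearMap.mul'_apply]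

end aux3

/-- If `H` is a Hopf algebra over a commutative ring `R` and the `R`-linear map
`μ ∘ Δ : H → H` (in Sweedler notation `a ↦ a₍₁₎a₍₂₎`) is multiplicative, then `H`
is commutative. -/
theorem stmt14 (R H : Type*) [CommRing R] [Ring H] [HopfAlgebra R H]
    (hmul : ∀ a b : H,
      LinearMap.mul' R H (Coalgebra.comul (R := R) (a * b)) =
        LinearMap.mul' R H (Coalgebra.comul (R := R) a) *
          LinearMap.mul' R H (Coalgebra.comul (R := R) b)) :
    ∀ a b : H, a * b = b * a := by
  intro a b
  set ra : Repr R a (H × H) := ℛ R a with hra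
  set rb : Repr R b (H × H) := ℛ R b with hrb
  set a₂ : ∀ i, Repr R (ra.right i) (H × H) := fun i => ℛ R (ra.right i) with ha₂
  set b₁ : ∀ j, Repr R (rb.left j) (H × H) := fun j => ℛ R (rb.left j) with hb₁
  have key : b * a = a * b := by
    calc b * a
        = stmt14f R H ((1 : H) ⊗ₜ[R] a) (b ⊗ₜ[R] (1 : H)) := by
          simp [stmt14f_apply]
      _ = stmt14f R H
            (∑ i ∈ ra.index, ∑ k ∈ (a₂ i).index,
              (antipode (R := R) (ra.left i) * (a₂ i).left k) ⊗ₜ[R] (a₂ i).right k)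
            (∑ j ∈ rb.index, ∑ l ∈ (b₁ j).index,
              (b₁ j).left l ⊗ₜ[R] ((b₁ j).right l * antipode (R := R) (rb.right j))) := by
          rw [claimA_s14 ra a₂, claimB_s14 rb b₁]
      _ = ∑ i ∈ ra.index, ∑ j ∈ rb.index, ∑ k ∈ (a₂ i).index, ∑ l ∈ (b₁ j).index,
            (antipode (R := R) (ra.left i) * (a₂ i).left k) * (b₁ j).left l *
              ((a₂ i).right k * ((b₁ j).right l * antipode (R := R) (rb.right j))) := by
          simp only [map_sum, LinearMap.sum_apply, stmt14f_apply]
          calc ∑ j ∈ rb.index, ∑ l ∈ (b₁ j).index, ∑ i ∈ ra.index, ∑ k ∈ (a₂ i).index,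
                (antipode (R := R) (ra.left i) * (a₂ i).left k) * (b₁ j).left l *
                  ((a₂ i).right k * ((b₁ j).right l * antipode (R := R) (rb.right j)))
              = ∑ j ∈ rb.index, ∑ i ∈ ra.index, ∑ l ∈ (b₁ j).index, ∑ k ∈ (a₂ i).index,
                (antipode (R := R) (ra.left i) * (a₂ i).left k) * (b₁ j).left l *
                  ((a₂ i).right k * ((b₁ j).right l * antipode (R := R) (rb.right j))) :=
                Finset.sum_congr rfl fun j _ => Finset.sum_comm ..
            _ = ∑ i ∈ ra.index, ∑ j ∈ rb.index, ∑ l ∈ (b₁ j).index, ∑ k ∈ (a₂ i).index,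
                (antipode (R := R) (ra.left i) * (a₂ i).left k) * (b₁ j).left l *
                  ((a₂ i).right k * ((b₁ j).right l * antipode (R := R) (rb.right j))) :=
                Finset.sum_comm ..
            _ = ∑ i ∈ ra.index, ∑ j ∈ rb.index, ∑ k ∈ (a₂ i).index, ∑ l ∈ (b₁ j).index,
                (antipode (R := R) (ra.left i) * (a₂ i).left k) * (b₁ j).left l *
                  ((a₂ i).right k * ((b₁ j).right l * antipode (R := R) (rb.right j))) :=
                Finset.sum_congr rfl fun i _ => Finset.sum_congr rfl fun j _ =>
                  Finset.sum_comm ..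
      _ = ∑ i ∈ ra.index, ∑ j ∈ rb.index,
            antipode (R := R) (ra.left i) *
              (LinearMap.mul' R H (comul (R := R) (ra.right i * rb.left j)) *
                antipode (R := R) (rb.right j)) := by
          refine Finset.sum_congr rfl fun i _ => Finset.sum_congr rfl fun j _ => ?_
          rw [Texp (ra.right i) (rb.left j) (a₂ i) (b₁ j), Finset.sum_mul, Finset.mul_sum]
          refine Finset.sum_congr rfl fun k _ => ?_
          rw [Finset.sum_mul, Finset.mul_sum]
          refine Finset.sum_congr rfl fun l _ => ?_
          simp only [mul_assoc]
      _ = ∑ i ∈ ra.index, ∑ j ∈ rb.index,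
            (antipode (R := R) (ra.left i) *
              LinearMap.mul' R H (comul (R := R) (ra.right i))) *
              (LinearMap.mul' R H (comul (R := R) (rb.left j)) *
                antipode (R := R) (rb.right j)) := by
          refine Finset.sum_congr rfl fun i _ => Finset.sum_congr rfl fun j _ => ?_
          rw [hmul]
          simp only [mul_assoc]
      _ = (∑ i ∈ ra.index,
            antipode (R := R) (ra.left i) *
              LinearMap.mul' R H (comul (R := R) (ra.right i))) *
          (∑ j ∈ rb.index,
            LinearMap.mul' R H (comul (R := R) (rb.left j)) *
              antipode (R := R) (rb.right j)) := by
          rw [Finset.sum_mul_sum]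
      _ = a * b := by rw [L1 ra, L2 rb]
  exact key.symm
end

section
/- Let a ∈ A^{⊗n}. Then a² = q·1 in A^{⊗n} if and only if there exist d ∈ {1, …, n}, a sign s ∈ {1, −1}, and an element f ∈ A^{⊗n} such that a = s·t_d + f·x_d. -/
open scoped TensorProduct

noncomputable section

/-- The free `ℤ`-algebra on two generators `ι 0` (playing the role of `t`)
and `ι 1` (playing the role of `x`). -/
abbrev FreeTwo : Type := FreeAlgebra ℤ (Fin 2)

/-- The relations `t² = q`, `t·x = −x·t`, `x² = 0`. -/
inductive ARel (q : ℕ) : FreeTwo → FreeTwo → Prop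
  | t_sq : ARel q (FreeAlgebra.ι ℤ (0 : Fin 2) * FreeAlgebra.ι ℤ (0 : Fin 2)) (q : FreeTwo)
  | t_x : ARel q (FreeAlgebra.ι ℤ (0 : Fin 2) * FreeAlgebra.ι ℤ (1 : Fin 2))
      (-(FreeAlgebra.ι ℤ (1 : Fin 2) * FreeAlgebra.ι ℤ (0 : Fin 2)))
  | x_sq : ARel q (FreeAlgebra.ι ℤ (1 : Fin 2) * FreeAlgebra.ι ℤ (1 : Fin 2)) 0

/-- The ring `A`: the quotient of the free `ℤ`-algebra on `t, x` by the two-sided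
ideal generated by `t² − q`, `t·x + x·t`, `x²`. -/
abbrev A (q : ℕ) : Type := RingQuot (ARel q)

/-- The generator `t` of `A`. -/
def tA (q : ℕ) : A q := RingQuot.mkRingHom (ARel q) (FreeAlgebra.ι ℤ (0 : Fin 2))

/-- The generator `x` of `A`. -/
def xA (q : ℕ) : A q := RingQuot.mkRingHom (ARel q) (FreeAlgebra.ι ℤ (1 : Fin 2))

/-- The `n`-fold tensor power `A^{⊗ n}` over `ℤ`, a ring with componentwise
multiplication. -/
abbrev Tpow (q n : ℕ) : Type := ⨂[ℤ] (_ : Fin n), A q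

/-- `t_i ∈ A^{⊗ n}`, the image of `t` under the `i`-th inclusion `A → A^{⊗ n}`. -/
def tI (q n : ℕ) (i : Fin n) : Tpow q n :=
  PiTensorProduct.tprod ℤ (fun j => if j = i then tA q else 1)

/-- `x_i ∈ A^{⊗ n}`, the image of `x` under the `i`-th inclusion `A → A^{⊗ n}`. -/
def xI (q n : ℕ) (i : Fin n) : Tpow q n :=
  PiTensorProduct.tprod ℤ (fun j => if j = i then xA q else 1)

abbrev A_intAlgebra (q : ℕ) : Algebra ℤ (A q) := Ring.toIntAlgebra _

set_option linter.unusedSectionVars false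
set_option linter.unusedVariables false
set_option maxHeartbeats 1000000
open Finset

section
attribute [local instance] A_intAlgebra

abbrev JJ : Type := Bool × Bool
def j1 : JJ := (false, false)
def jt : JJ := (true, false)
def jx : JJ := (false, true)
def jtx : JJ := (true, true)
def jA (p r : JJ) : JJ := (xor p.1 r.1, xor p.2 r.2)
def kap (q : ℕ) (p r : JJ) : ℤ :=
  if p.2 && r.2 then 0 else
    (if p.2 && r.1 then -1 else 1) * (if p.1 && r.1 then (q : ℤ) else 1)
@[simp] lemma jA_self (a : JJ) : jA a a = j1 := by rcases a with ⟨a1,a2⟩; cases a1 <;> cases a2 <;> rfl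
@[simp] lemma jA_one_left (a : JJ) : jA j1 a = a := by rcases a with ⟨a1,a2⟩; cases a1 <;> cases a2 <;> rfl
@[simp] lemma jA_one_right (a : JJ) : jA a j1 = a := by rcases a with ⟨a1,a2⟩; cases a1 <;> cases a2 <;> rfl
@[simp] lemma jA_cancel (a b : JJ) : jA a (jA a b) = b := by
  rcases a with ⟨a1,a2⟩; rcases b with ⟨b1,b2⟩; cases a1 <;> cases a2 <;> cases b1 <;> cases b2 <;> rfl
lemma jA_comm (a b : JJ) : jA a b = jA b a := by
  rcases a with ⟨a1,a2⟩; rcases b with ⟨b1,b2⟩; cases a1 <;> cases a2 <;> cases b1 <;> cases b2 <;> rfl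
lemma jA_eq_iff (a b c : JJ) : jA a b = c ↔ a = jA c b := by
  rcases a with ⟨a1,a2⟩; rcases b with ⟨b1,b2⟩; rcases c with ⟨c1,c2⟩
  cases a1 <;> cases a2 <;> cases b1 <;> cases b2 <;> cases c1 <;> cases c2 <;> simp [jA, j1]
lemma jA_eq_one_iff (a b : JJ) : jA a b = j1 ↔ a = b := by rw [jA_eq_iff, jA_one_left]
@[simp] lemma kap_one_left (q : ℕ) (r : JJ) : kap q j1 r = 1 := by simp [kap, j1]
@[simp] lemma kap_one_right (q : ℕ) (p : JJ) : kap q p j1 = 1 := by simp [kap, j1]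
lemma kap_coc (q : ℕ) (a b c : JJ) :
    kap q a (jA a b) * kap q b (jA b c) = kap q a (jA a c) * kap q (jA a b) (jA b c) := by
  rcases a with ⟨a1,a2⟩; rcases b with ⟨b1,b2⟩; rcases c with ⟨c1,c2⟩
  cases a1 <;> cases a2 <;> cases b1 <;> cases b2 <;> cases c1 <;> cases c2 <;> simp [kap, jA]

---- chunk 2 ----

variable {ι : Type} [Fintype ι] [DecidableEq ι]

/-- pointwise xor of exponent vectors -/
def mA (u v : ι → JJ) : ι → JJ := fun i => jA (u i) (v i)

def mOne : ι → JJ := fun _ => j1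

/-- total structure constant -/
def kapT (q : ℕ) (u v : ι → JJ) : ℤ := ∏ i, kap q (u i) (v i)

@[simp] lemma mA_cancel (u v : ι → JJ) : mA u (mA u v) = v := by
  funext i; simp [mA]

@[simp] lemma mA_one_left (u : ι → JJ) : mA mOne u = u := by funext i; simp [mA, mOne]
@[simp] lemma mA_one_right (u : ι → JJ) : mA u mOne = u := by funext i; simp [mA, mOne]
@[simp] lemma mA_self (u : ι → JJ) : mA u u = mOne := by funext i; simp [mA, mOne]

lemma mA_comm (u v : ι → JJ) : mA u v = mA v u := by funext i; simp [mA, jA_comm (u i)]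

lemma mA_eq_iff (u v w : ι → JJ) : mA u v = w ↔ u = mA w v := by
  constructor
  · intro h; funext i; exact (jA_eq_iff _ _ _).mp (congrFun h i)
  · intro h; funext i; exact (jA_eq_iff _ _ _).mpr (congrFun h i)

lemma mA_eq_one_iff (u v : ι → JJ) : mA u v = mOne ↔ u = v := by
  rw [mA_eq_iff]; simp

@[simp] lemma kapT_one_left (q : ℕ) (u : ι → JJ) : kapT q mOne u = 1 := by
  simp [kapT, mOne]

@[simp] lemma kapT_one_right (q : ℕ) (u : ι → JJ) : kapT q u mOne = 1 := by
  simp [kapT, mOne]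

lemma kapT_coc (q : ℕ) (a b c : ι → JJ) :
    kapT q a (mA a b) * kapT q b (mA b c) = kapT q a (mA a c) * kapT q (mA a b) (mA b c) := by
  simp only [kapT, mA, ← Finset.prod_mul_distrib]
  exact Finset.prod_congr rfl fun i _ => kap_coc q (a i) (b i) (c i)

/-- The concrete model of the tensor power: functions on exponent vectors. -/
def BB (q : ℕ) (ι : Type) : Type := (ι → JJ) → ℤ

namespace BB

variable {q : ℕ}

instance : AddCommGroup (BB q ι) := Pi.addCommGroup

instance : Mul (BB q ι) :=
  ⟨fun f g m => ∑ u : ι → JJ, kapT q u (mA u m) * f u * g (mA u m)⟩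

instance : One (BB q ι) := ⟨fun m => if m = mOne then 1 else 0⟩

lemma mul_apply (f g : BB q ι) (m : ι → JJ) :
    (f * g) m = ∑ u : ι → JJ, kapT q u (mA u m) * f u * g (mA u m) := rfl

lemma one_apply (m : ι → JJ) : (1 : BB q ι) m = if m = mOne then 1 else 0 := rfl

lemma add_apply (f g : BB q ι) (m : ι → JJ) : (f + g) m = f m + g m := rfl
lemma zero_apply (m : ι → JJ) : (0 : BB q ι) m = 0 := rfl
lemma neg_apply (f : BB q ι) (m : ι → JJ) : (-f) m = -(f m) := rfl
lemma zsmul_apply (s : ℤ) (f : BB q ι) (m : ι → JJ) : (s • f) m = s * (f m) := by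
  show s • (f m) = s * f m; simp

instance : Ring (BB q ι) where
  __ := (inferInstance : AddCommGroup (BB q ι))
  left_distrib f g h := by
    funext m
    simp only [mul_apply, add_apply]
    rw [← Finset.sum_add_distrib]
    exact Finset.sum_congr rfl fun u _ => by ring
  right_distrib f g h := by
    funext m
    simp only [mul_apply, add_apply]
    rw [← Finset.sum_add_distrib]
    exact Finset.sum_congr rfl fun u _ => by ring
  zero_mul f := by
    funext m; simp only [mul_apply, zero_apply]; simp
  mul_zero f := by
    funext m; simp only [mul_apply, zero_apply]; simp
  one_mul f := by
    funext m
    rw [mul_apply, Finset.sum_eq_single mOne]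
    · simp [one_apply]
    · intro u _ hu; simp [one_apply, hu]
    · intro h; exact absurd (Finset.mem_univ _) h
  mul_one f := by
    funext m
    rw [mul_apply, Finset.sum_eq_single m]
    · simp [one_apply]
    · intro u _ hu
      have : mA u m ≠ mOne := fun h => hu ((mA_eq_one_iff u m).mp h)
      simp [one_apply, this]
    · intro h; exact absurd (Finset.mem_univ _) h
  mul_assoc f g h := by
    funext m
    simp only [mul_apply, Finset.sum_mul, Finset.mul_sum]
    rw [← Fintype.sum_prod_type', ← Fintype.sum_prod_type']
    refine Fintype.sum_equiv ⟨fun p => (p.2, mA p.2 p.1), fun p => (mA p.1 p.2, p.1), ?_, ?_⟩ _ _ ?_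
    · rintro ⟨u, v⟩; simp
    · rintro ⟨v, w⟩; simp
    · rintro ⟨u, v⟩
      simp only [Equiv.coe_fn_mk]
      have harg : mA (mA v u) (mA v m) = mA u m := by
        funext i; simp only [mA]
        rcases (v i) with ⟨a1,a2⟩; rcases (u i) with ⟨b1,b2⟩; rcases (m i) with ⟨c1,c2⟩
        cases a1 <;> cases a2 <;> cases b1 <;> cases b2 <;> cases c1 <;> cases c2 <;> rfl
      have hcoc := kapT_coc q v u m
      rw [harg]
      linear_combination (f v * g (mA v u) * h (mA u m)) * hcoc
end BB

namespace BB
variable {q : ℕ} {ι : Type} [Fintype ι] [DecidableEq ι]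

/-- basis element -/
def bE (m₀ : ι → JJ) : BB q ι := fun m => if m = m₀ then 1 else 0

lemma bE_apply (m₀ m : ι → JJ) : (bE m₀ : BB q ι) m = if m = m₀ then 1 else 0 := rfl

lemma mul_bE_left (m₀ : ι → JJ) (g : BB q ι) (m : ι → JJ) :
    ((bE m₀ : BB q ι) * g) m = kapT q m₀ (mA m₀ m) * g (mA m₀ m) := by
  rw [mul_apply, Finset.sum_eq_single m₀]
  · simp [bE_apply]
  · intro u _ hu; simp [bE_apply, hu]
  · intro h; exact absurd (Finset.mem_univ _) h

lemma jA_cancel' (a b : JJ) : jA (jA a b) b = a := by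
  rw [jA_comm]; rw [jA_comm a b]; exact jA_cancel b a

lemma mA_cancel' (u v : ι → JJ) : mA (mA u v) v = u := by
  funext i; exact jA_cancel' (u i) (v i)

lemma mul_bE_right (f : BB q ι) (m₀ : ι → JJ) (m : ι → JJ) :
    (f * (bE m₀ : BB q ι)) m = kapT q (mA m₀ m) m₀ * f (mA m₀ m) := by
  rw [mul_apply, Finset.sum_eq_single (mA m₀ m)]
  · rw [mA_cancel']
    simp [bE_apply, mul_comm]
  · intro u _ hu
    have : mA u m ≠ m₀ := by
      intro h; exact hu ((mA_eq_iff u m m₀).mp h)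
    simp [bE_apply, this]
  · intro h; exact absurd (Finset.mem_univ _) h

lemma bE_mul_bE (m₀ m₁ : ι → JJ) :
    ((bE m₀ : BB q ι) * bE m₁) = kapT q m₀ m₁ • (bE (mA m₀ m₁) : BB q ι) := by
  funext m
  rw [mul_bE_left, zsmul_apply, bE_apply, bE_apply]
  by_cases hm : m = mA m₀ m₁
  · subst hm; rw [mA_cancel]; simp
  · have : mA m₀ m ≠ m₁ := by
      intro h
      exact hm (by rw [← h, mA_cancel])
    simp [this, hm]

lemma intCast_eq_smul_one (z : ℤ) : ((z : ℤ) : BB q ι) = z • (1 : BB q ι) := by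
  rw [zsmul_eq_mul, mul_one]

lemma intCast_apply (z : ℤ) (m : ι → JJ) :
    ((z : ℤ) : BB q ι) m = if m = mOne then z else 0 := by
  rw [intCast_eq_smul_one, zsmul_apply, one_apply]
  by_cases hm : m = mOne <;> simp [hm]

lemma natCast_apply (k : ℕ) (m : ι → JJ) :
    ((k : ℕ) : BB q ι) m = if m = mOne then (k : ℤ) else 0 := by
  rw [show ((k : ℕ) : BB q ι) = (((k : ℤ) : ℤ) : BB q ι) by push_cast; rfl, intCast_apply]

/-- exponent vector of `t_d` -/
def mT (d : ι) : ι → JJ := fun i => if i = d then jt else j1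
/-- exponent vector of `x_d` -/
def mX (d : ι) : ι → JJ := fun i => if i = d then jx else j1

/-- the element `t_d` -/
def TB (q : ℕ) (d : ι) : BB q ι := bE (mT d)
/-- the element `x_d` -/
def XB (q : ℕ) (d : ι) : BB q ι := bE (mX d)

lemma kapT_mT_left (d : ι) (v : ι → JJ) : kapT q (mT d) v = kap q jt (v d) := by
  rw [kapT, Finset.prod_eq_single d]
  · simp [mT]
  · intro i _ hi; simp [mT, hi]
  · intro h; exact absurd (Finset.mem_univ _) h

lemma kapT_mT_right (d : ι) (v : ι → JJ) : kapT q v (mT d) = kap q (v d) jt := by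
  rw [kapT, Finset.prod_eq_single d]
  · simp [mT]
  · intro i _ hi; simp [mT, hi]
  · intro h; exact absurd (Finset.mem_univ _) h

lemma kapT_mX_right (d : ι) (v : ι → JJ) : kapT q v (mX d) = kap q (v d) jx := by
  rw [kapT, Finset.prod_eq_single d]
  · simp [mX]
  · intro i _ hi; simp [mX, hi]
  · intro h; exact absurd (Finset.mem_univ _) h

lemma mA_mT_apply (d : ι) (m : ι → JJ) (i : ι) :
    (mA (mT d) m) i = if i = d then jA jt (m i) else m i := by
  by_cases hi : i = d <;> simp [mA, mT, hi]

lemma mA_mX_apply (d : ι) (m : ι → JJ) (i : ι) :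
    (mA (mX d) m) i = if i = d then jA jx (m i) else m i := by
  by_cases hi : i = d <;> simp [mA, mX, hi]

lemma kap_jt_jt : kap q jt jt = (q : ℤ) := by simp [kap, jt]

lemma TB_mul_TB (d : ι) : (TB q d * TB q d : BB q ι) = ((q : ℕ) : BB q ι) := by
  rw [TB, bE_mul_bE, mA_self]
  funext m
  rw [zsmul_apply, natCast_apply, bE_apply]
  have : kapT q (mT d) (mT d) = (q : ℤ) := by rw [kapT_mT_left]; simp [mT, kap_jt_jt]
  rw [this]
  by_cases hm : m = mOne <;> simp [hm]

lemma kap_jx_cancel (j : JJ) : kap q (jA jx j) jx = if j.2 then 1 else 0 := by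
  rcases j with ⟨a, b⟩; cases a <;> cases b <;> simp [kap, jA, jx]

lemma mul_XB_apply (f : BB q ι) (d : ι) (m : ι → JJ) :
    (f * XB q d) m = if (m d).2 then f (mA (mX d) m) else 0 := by
  rw [XB, mul_bE_right, kapT_mX_right]
  rw [show (mA (mX d) m) d = jA jx (m d) by rw [mA_mX_apply]; simp]
  rw [kap_jx_cancel]
  by_cases h : (m d).2 <;> simp [h]

lemma kap_jt_cancel (j : JJ) (h : j.2 = true) :
    kap q jt (jA jt j) + kap q (jA jt j) jt = 0 := by
  rcases j with ⟨b, c⟩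
  simp only at h; subst h
  cases b <;> simp [kap, jA, jt]

lemma TB_anticomm (f : BB q ι) (d : ι) :
    TB q d * (f * XB q d) + (f * XB q d) * TB q d = 0 := by
  funext m
  rw [add_apply, zero_apply, TB, mul_bE_left, mul_bE_right, kapT_mT_left, kapT_mT_right]
  rw [show (mA (mT d) m) d = jA jt (m d) by rw [mA_mT_apply]; simp]
  rw [mul_XB_apply]
  rw [show (mA (mT d) m) d = jA jt (m d) by rw [mA_mT_apply]; simp]
  have hj2 : ∀ j : JJ, (jA jt j).2 = j.2 := by
    rintro ⟨a, b⟩; cases a <;> cases b <;> rfl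
  by_cases h : (m d).2
  · have h2 : (jA jt (m d)).2 = true := by rw [hj2]; exact h
    rw [if_pos h2]
    have := kap_jt_cancel (q := q) (m d) h
    set F := f (mA (mX d) (mA (mT d) m))
    ring_nf
    linear_combination F * this
  · have h2 : (jA jt (m d)).2 = false := by
      rw [hj2]; simpa using h
    rw [if_neg (by rw [h2]; exact fun hh => by cases hh)]
    ring

lemma kap_xx (j j' : JJ) (h : j.2 = true) (h' : j'.2 = true) : kap q j j' = 0 := by
  simp [kap, h, h']

lemma XB_mul_XB_zero (f g : BB q ι) (d : ι) :
    (f * XB q d) * (g * XB q d) = 0 := by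
  funext m
  rw [mul_apply, zero_apply]
  refine Finset.sum_eq_zero fun u _ => ?_
  by_cases h1 : (u d).2
  · by_cases h2 : ((mA u m) d).2
    · have : kapT q u (mA u m) = 0 :=
        Finset.prod_eq_zero (Finset.mem_univ d) (kap_xx _ _ (by simp [h1]) (by simp [h2]))
      rw [this]; ring
    · rw [mul_XB_apply g d, if_neg h2]; ring
  · rw [mul_XB_apply f d, if_neg h1]; ring

theorem key_bwd {d : ι} {s : ℤ} (hs : s = 1 ∨ s = -1) (f : BB q ι) :
    (s • TB q d + f * XB q d) * (s • TB q d + f * XB q d) = ((q : ℕ) : BB q ι) := by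
  have hss : s * s = 1 := by rcases hs with rfl | rfl <;> norm_num
  rw [add_mul, mul_add, mul_add, smul_mul_assoc, smul_mul_assoc, mul_smul_comm, mul_smul_comm,
    smul_smul, hss, one_smul, TB_mul_TB, XB_mul_XB_zero, add_zero, add_assoc, ← smul_add,
    TB_anticomm, smul_zero, add_zero]

end BB

namespace BB
variable {q : ℕ} {ι : Type} [Fintype ι] [DecidableEq ι]

open Zsqrtd in
/-- per-slot weight of the character determined by signs `ε` -/
def wj (q : ℕ) (e : Bool) (j : JJ) : ℤ√(q : ℤ) :=
  if j.2 then 0 else if j.1 then (if e then -sqrtd else sqrtd) else 1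

/-- total weight -/
def WW (q : ℕ) (ε : ι → Bool) (m : ι → JJ) : ℤ√(q : ℤ) := ∏ i, wj q (ε i) (m i)

/-- the character of `BB q ι` determined by signs `ε` -/
def chi (q : ℕ) (ε : ι → Bool) (f : BB q ι) : ℤ√(q : ℤ) := ∑ m, (f m : ℤ√(q : ℤ)) * WW q ε m

lemma wj_mul (e : Bool) (j j' : JJ) :
    ((kap q j j' : ℤ) : ℤ√(q : ℤ)) * wj q e (jA j j') = wj q e j * wj q e j' := by
  rcases j with ⟨a, b⟩; rcases j' with ⟨c, d⟩
  cases a <;> cases b <;> cases c <;> cases d <;> cases e <;>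
    simp [kap, wj, jA, Zsqrtd.dmuld] <;> ring_nf <;>
    simp [pow_two, Zsqrtd.dmuld]

lemma kapT_WW (ε : ι → Bool) (u v : ι → JJ) :
    ((kapT q u v : ℤ) : ℤ√(q : ℤ)) * WW q ε (mA u v) = WW q ε u * WW q ε v := by
  rw [kapT, WW, WW, WW, Int.cast_prod, ← Finset.prod_mul_distrib, ← Finset.prod_mul_distrib]
  exact Finset.prod_congr rfl fun i _ => wj_mul (ε i) (u i) (v i)

lemma chi_mul (ε : ι → Bool) (f g : BB q ι) :
    chi q ε (f * g) = chi q ε f * chi q ε g := by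
  rw [chi, chi, chi, Finset.sum_mul_sum]
  simp only [mul_apply, Int.cast_sum, Int.cast_mul, Finset.sum_mul]
  rw [Finset.sum_comm]
  refine Finset.sum_congr rfl fun u _ => ?_
  rw [Fintype.sum_equiv ⟨fun m => mA u m, fun v => mA u v, mA_cancel u, mA_cancel u⟩
      (fun m => ((kapT q u (mA u m) : ℤ) : ℤ√(q:ℤ)) * (f u : ℤ√(q:ℤ)) * (g (mA u m) : ℤ√(q:ℤ)) * WW q ε m)
      (fun v => ((kapT q u v : ℤ) : ℤ√(q:ℤ)) * (f u : ℤ√(q:ℤ)) * (g v : ℤ√(q:ℤ)) * WW q ε (mA u v))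
      (fun m => by simp only [Equiv.coe_fn_mk, mA_cancel])]
  exact Finset.sum_congr rfl fun v _ =>
    by linear_combination ((f u : ℤ√(q:ℤ)) * (g v : ℤ√(q:ℤ))) * kapT_WW ε u v

lemma WW_one (ε : ι → Bool) : WW q ε mOne = 1 := by
  rw [WW]; apply Finset.prod_eq_one; intro i _; simp [wj, mOne, j1]

lemma chi_one (ε : ι → Bool) : chi q ε (1 : BB q ι) = 1 := by
  rw [chi, Finset.sum_eq_single mOne]
  · simp [one_apply, WW_one]
  · intro m _ hm; simp [one_apply, hm]
  · intro h; exact absurd (Finset.mem_univ _) h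

lemma chi_natCast (ε : ι → Bool) (k : ℕ) :
    chi q ε ((k : ℕ) : BB q ι) = ((k : ℕ) : ℤ√(q : ℤ)) := by
  rw [chi, Finset.sum_eq_single mOne]
  · simp [natCast_apply, WW_one]
  · intro m _ hm; simp [natCast_apply, hm]
  · intro h; exact absurd (Finset.mem_univ _) h

/-- sign of the monomial `g` under the character `ε` -/
def sig (g ε : ι → Bool) : ℤ := ∏ i, (if g i && ε i then -1 else 1)

/-- number of `t`-factors -/
def cg (g : ι → Bool) : ℕ := (Finset.univ.filter (fun i => g i = true)).card

/-- `x`-free exponent vector -/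
def mδ0 (g : ι → Bool) : ι → JJ := fun i => (g i, false)

lemma WW_mδ0 (ε g : ι → Bool) :
    WW q ε (mδ0 g) = ((sig g ε : ℤ) : ℤ√(q : ℤ)) * Zsqrtd.sqrtd ^ cg g := by
  have hslot : ∀ i, wj q (ε i) (mδ0 g i) =
      ((if g i && ε i then (-1 : ℤ) else 1) : ℤ√(q:ℤ)) * (if g i then Zsqrtd.sqrtd else 1) := by
    intro i; rcases hg : g i <;> rcases he : ε i <;> simp [wj, mδ0, hg, he]
  rw [WW, Finset.prod_congr rfl fun i _ => hslot i, Finset.prod_mul_distrib, sig, Int.cast_prod]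
  congr 1
  · exact Finset.prod_congr rfl fun i _ => by rcases hg : g i && ε i <;> simp [hg]
  · rw [cg, ← Finset.prod_filter_mul_prod_filter_not Finset.univ (fun i => g i = true)]
    rw [Finset.prod_congr rfl (fun i hi => if_pos (Finset.mem_filter.mp hi).2),
        Finset.prod_congr rfl (fun i hi => if_neg (by simpa using (Finset.mem_filter.mp hi).2)),
        Finset.prod_const, Finset.prod_const, one_pow, mul_one]

/-- pair-of-Bool-vectors description of exponent vectors -/
def EE : ((ι → Bool) × (ι → Bool)) ≃ (ι → JJ) where
  toFun p := fun i => (p.1 i, p.2 i)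
  invFun m := (fun i => (m i).1, fun i => (m i).2)
  left_inv := by rintro ⟨g, δ⟩; rfl
  right_inv := by intro m; rfl

lemma WW_vanish (ε : ι → Bool) (m : ι → JJ) (i : ι) (h : (m i).2 = true) :
    WW q ε m = 0 := by
  rw [WW]; exact Finset.prod_eq_zero (Finset.mem_univ i) (by simp [wj, h])

lemma chi_expand (ε : ι → Bool) (b : BB q ι) :
    chi q ε b = ∑ g : ι → Bool,
      (b (mδ0 g) : ℤ√(q : ℤ)) * ((sig g ε : ℤ) : ℤ√(q : ℤ)) * Zsqrtd.sqrtd ^ cg g := by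
  rw [chi, ← Equiv.sum_comp (EE (ι := ι)), Fintype.sum_prod_type]
  refine Finset.sum_congr rfl fun g _ => ?_
  rw [Finset.sum_eq_single (fun _ => false)]
  · rw [show EE (g, fun _ => false) = mδ0 g from rfl, WW_mδ0]; ring
  · intro δ _ hδ
    obtain ⟨i, hi⟩ := Function.ne_iff.mp hδ
    have : (EE (g, δ) i).2 = true := by
      simp only [EE, Equiv.coe_fn_mk]
      simpa using hi
    rw [WW_vanish ε _ i this, mul_zero]
  · intro h; exact absurd (Finset.mem_univ _) h

lemma orth (g h : ι → Bool) :
    ∑ ε : ι → Bool, sig g ε * sig h ε =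
      if g = h then (2 ^ Fintype.card ι : ℤ) else 0 := by
  have hterm : ∀ ε : ι → Bool, sig g ε * sig h ε =
      ∏ i, ((if g i && ε i then (-1:ℤ) else 1) * (if h i && ε i then -1 else 1)) := by
    intro ε; rw [sig, sig, ← Finset.prod_mul_distrib]
  rw [Finset.sum_congr rfl fun ε _ => hterm ε, ← Fintype.prod_sum (fun (i : ι) (b : Bool) => (if g i && b then (-1:ℤ) else 1) * (if h i && b then -1 else 1))]
  by_cases hgh : g = h
  · subst hgh
    rw [if_pos rfl]
    have : ∀ i, (∑ b : Bool, ((if g i && b then (-1:ℤ) else 1) * if g i && b then -1 else 1)) = 2 := by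
      intro i; rcases hg : g i <;> simp [hg, Fintype.sum_bool]
    rw [Finset.prod_congr rfl fun i _ => this i, Finset.prod_const, Finset.card_univ]
  · rw [if_neg hgh]
    obtain ⟨i, hi⟩ := Function.ne_iff.mp hgh
    refine Finset.prod_eq_zero (Finset.mem_univ i) ?_
    rcases hg : g i <;> rcases hh : h i <;> simp [hg, hh, Fintype.sum_bool] <;>
      (exfalso; rw [hg, hh] at hi; exact hi rfl)

end BB

namespace BB
variable {q : ℕ} {ι : Type} [Fintype ι] [DecidableEq ι]

lemma q_ne_zero (hq : ¬ IsSquare q) : q ≠ 0 := fun h => hq (h ▸ ⟨0, rfl⟩)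
lemma q_ne_one (hq : ¬ IsSquare q) : q ≠ 1 := fun h => hq (h ▸ ⟨1, rfl⟩)
lemma two_le_q (hq : ¬ IsSquare q) : 2 ≤ q := by
  rcases Nat.lt_or_ge q 2 with h | h
  · interval_cases q
    · exact absurd rfl (q_ne_zero hq)
    · exact absurd rfl (q_ne_one hq)
  · exact h

lemma sqrt_q (hq : ¬ IsSquare q) (z : ℤ√(q:ℤ))
    (hz : z * z = ((q : ℕ) : ℤ√(q:ℤ))) : z = Zsqrtd.sqrtd ∨ z = -Zsqrtd.sqrtd := by
  obtain ⟨a, b⟩ := z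
  have hre := congrArg Zsqrtd.re hz
  have him := congrArg Zsqrtd.im hz
  simp [Zsqrtd.re_mul, Zsqrtd.im_mul] at hre him
  have hab : a * b = 0 := by linarith
  rcases mul_eq_zero.mp hab with ha | hb
  · subst ha
    simp at hre
    have hq0 : ((q:ℕ) : ℤ) ≠ 0 := Int.natCast_ne_zero.mpr (q_ne_zero hq)
    have hb2 : b * b = 1 := by
      have := hre
      have h1 : ((q:ℕ):ℤ) * (b * b) = ((q:ℕ):ℤ) * 1 := by linarith
      exact mul_left_cancel₀ hq0 h1
    rcases Int.isUnit_iff.mp (IsUnit.of_mul_eq_one (a := b) b hb2) with rfl | rfl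
    · left; simp [Zsqrtd.ext_iff, Zsqrtd.re_sqrtd, Zsqrtd.im_sqrtd]
    · right; simp [Zsqrtd.ext_iff, Zsqrtd.re_sqrtd, Zsqrtd.im_sqrtd]
  · subst hb
    exfalso
    apply hq
    refine ⟨a.natAbs, ?_⟩
    have : ((q:ℕ) : ℤ) = (a.natAbs * a.natAbs : ℕ) := by
      rw [Int.natAbs_mul_self]; simp at hre; linarith
    exact_mod_cast this

lemma sig_abs (g ε : ι → Bool) : |sig g ε| = 1 := by
  rw [sig, Finset.abs_prod]
  apply Finset.prod_eq_one
  intro i _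
  rcases hg : g i && ε i <;> simp [hg]

lemma coeff_vanish (hq : ¬ IsSquare q) (b : BB q ι) (hb : b * b = ((q : ℕ) : BB q ι))
    (h : ι → Bool) (hcg : cg h ≠ 1) : b (mδ0 h) = 0 := by
  classical
  have hchi : ∀ ε : ι → Bool, chi q ε b * chi q ε b = ((q:ℕ) : ℤ√(q:ℤ)) := fun ε => by
    rw [← chi_mul, hb, chi_natCast]
  set sgn : (ι → Bool) → ℤ := fun ε => if chi q ε b = Zsqrtd.sqrtd then 1 else -1 with hsgn_def
  have hsgn : ∀ ε, chi q ε b = ((sgn ε : ℤ) : ℤ√(q:ℤ)) * Zsqrtd.sqrtd := by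
    intro ε
    rcases sqrt_q hq _ (hchi ε) with h1 | h1
    · simp [hsgn_def, h1]
    · have hne : (-Zsqrtd.sqrtd : ℤ√(q:ℤ)) ≠ Zsqrtd.sqrtd := by
        intro hc; have := congrArg Zsqrtd.im hc; simp at this
      rcases eq_or_ne (chi q ε b) Zsqrtd.sqrtd with h2 | h2
      · simp [hsgn_def, h2]
      · rw [h1, hsgn_def]; simp only [h1, hne, if_false]; push_cast; ring
  have habs_sgn : ∀ ε, |sgn ε| = 1 := by
    intro ε; rcases eq_or_ne (chi q ε b) Zsqrtd.sqrtd with h2 | h2 <;> simp [hsgn_def, h2]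
  set Sh : ℤ := ∑ ε : ι → Bool, sig h ε * sgn ε with hSh_def
  set N : ℕ := Fintype.card ι with hN_def
  have way1 : ∑ ε : ι → Bool, ((sig h ε : ℤ) : ℤ√(q:ℤ)) * chi q ε b
      = ((Sh : ℤ) : ℤ√(q:ℤ)) * Zsqrtd.sqrtd := by
    rw [Finset.sum_congr rfl (fun ε _ => by rw [hsgn ε])]
    rw [hSh_def, Int.cast_sum, Finset.sum_mul]
    exact Finset.sum_congr rfl fun ε _ => by push_cast; ring
  have way2 : ∑ ε : ι → Bool, ((sig h ε : ℤ) : ℤ√(q:ℤ)) * chi q ε b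
      = ((2 ^ N * b (mδ0 h) : ℤ) : ℤ√(q:ℤ)) * Zsqrtd.sqrtd ^ cg h := by
    rw [Finset.sum_congr rfl (fun ε _ => by rw [chi_expand ε b, Finset.mul_sum])]
    rw [Finset.sum_comm]
    have hg' : ∀ g : ι → Bool,
        (∑ ε : ι → Bool, ((sig h ε : ℤ) : ℤ√(q:ℤ)) *
          ((b (mδ0 g) : ℤ√(q:ℤ)) * ((sig g ε : ℤ) : ℤ√(q:ℤ)) * Zsqrtd.sqrtd ^ cg g))
        = (b (mδ0 g) : ℤ√(q:ℤ)) * (((∑ ε : ι → Bool, sig g ε * sig h ε) : ℤ) : ℤ√(q:ℤ))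
            * Zsqrtd.sqrtd ^ cg g := by
      intro g
      rw [Int.cast_sum, Finset.mul_sum, Finset.sum_mul]
      exact Finset.sum_congr rfl fun ε _ => by push_cast; ring
    rw [Finset.sum_congr rfl fun g _ => hg' g]
    rw [Finset.sum_eq_single h]
    · rw [orth, if_pos rfl]; push_cast; ring
    · intro g _ hgh; rw [orth, if_neg hgh]; simp
    · intro hh; exact absurd (Finset.mem_univ _) hh
  have key : ((2 ^ N * b (mδ0 h) : ℤ) : ℤ√(q:ℤ)) * Zsqrtd.sqrtd ^ cg h
      = ((Sh : ℤ) : ℤ√(q:ℤ)) * Zsqrtd.sqrtd := way2.symm.trans way1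
  have hShb : |Sh| ≤ 2 ^ N := by
    calc |Sh| ≤ ∑ ε : ι → Bool, |sig h ε * sgn ε| := Finset.abs_sum_le_sum_abs _ _
    _ = ∑ _ε : ι → Bool, 1 := by
        refine Finset.sum_congr rfl fun ε _ => ?_
        rw [abs_mul, sig_abs, habs_sgn, mul_one]
    _ = 2 ^ N := by
        rw [Finset.sum_const, Finset.card_univ]
        simp [hN_def, Fintype.card_fun]
  rcases Nat.even_or_odd (cg h) with he | ho
  · obtain ⟨l, hl⟩ := he
    have hpow : (Zsqrtd.sqrtd : ℤ√(q:ℤ)) ^ cg h = (((q:ℤ) ^ l : ℤ) : ℤ√(q:ℤ)) := by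
      rw [hl, ← two_mul, pow_mul, show (Zsqrtd.sqrtd : ℤ√(q:ℤ))^2 = (((q:ℤ)) : ℤ√(q:ℤ)) by
        rw [pow_two]; exact Zsqrtd.dmuld]
      push_cast; ring
    rw [hpow, ← Int.cast_mul] at key
    have hre := congrArg Zsqrtd.re key
    simp only [Zsqrtd.im_mul, Zsqrtd.re_mul, Zsqrtd.re_intCast, Zsqrtd.im_intCast,
      Zsqrtd.re_sqrtd, Zsqrtd.im_sqrtd, mul_zero, zero_mul, mul_one, add_zero, zero_add] at hre
    rw [mul_assoc] at hre
    have hq0 : ((q:ℤ)) ^ l ≠ 0 := pow_ne_zero _ (Int.natCast_ne_zero.mpr (q_ne_zero hq))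
    have h2N : ((2:ℤ) ^ N) ≠ 0 := pow_ne_zero _ two_ne_zero
    rcases mul_eq_zero.mp hre with h1 | h1
    · exact absurd h1 h2N
    · rcases mul_eq_zero.mp h1 with h2 | h2
      · exact h2
      · exact absurd h2 hq0
  · obtain ⟨l, hl⟩ := ho
    have hpow : (Zsqrtd.sqrtd : ℤ√(q:ℤ)) ^ cg h
        = (((q:ℤ) ^ l : ℤ) : ℤ√(q:ℤ)) * Zsqrtd.sqrtd := by
      rw [hl, pow_succ, pow_mul, show (Zsqrtd.sqrtd : ℤ√(q:ℤ))^2 = (((q:ℤ)) : ℤ√(q:ℤ)) by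
        rw [pow_two]; exact Zsqrtd.dmuld]
      push_cast; ring
    rw [hpow, ← mul_assoc, ← Int.cast_mul] at key
    have him := congrArg Zsqrtd.im key
    simp only [Zsqrtd.im_mul, Zsqrtd.re_mul, Zsqrtd.re_intCast, Zsqrtd.im_intCast,
      Zsqrtd.re_sqrtd, Zsqrtd.im_sqrtd, mul_zero, zero_mul, mul_one, add_zero, zero_add] at him
    have hl0 : l ≠ 0 := by
      intro h0; rw [h0] at hl; simp at hl; exact hcg hl
    by_contra hch
    have h1 : (1:ℤ) ≤ |b (mδ0 h)| := Int.one_le_abs (by simpa using hch)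
    have h2 : (2:ℤ) ≤ ((q:ℤ)) ^ l := by
      calc (2:ℤ) ≤ (q:ℤ) := by exact_mod_cast two_le_q hq
      _ ≤ ((q:ℤ)) ^ l := le_self_pow₀ (by exact_mod_cast Nat.one_le_of_lt (two_le_q hq)) hl0
    have hSh_eq : |Sh| = 2 ^ N * |b (mδ0 h)| * ((q:ℤ)) ^ l := by
      rw [← him, abs_mul, abs_mul, abs_of_nonneg (a := ((2:ℤ))^N) (by positivity),
        abs_of_nonneg (a := ((q:ℤ))^l) (by positivity)]
    have hpos : (0:ℤ) < 2 ^ N := by positivity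
    have hstep : (1:ℤ) * 2 ≤ |b (mδ0 h)| * ((q:ℤ)) ^ l :=
      mul_le_mul h1 h2 (by norm_num) (abs_nonneg _)
    nlinarith [hShb, hSh_eq, hpos, hstep]
end BB

namespace BB
variable {q : ℕ} {ι : Type} [Fintype ι] [DecidableEq ι]

lemma sub_apply (f g : BB q ι) (m : ι → JJ) : (f - g) m = f m - g m := rfl

lemma prod_pow_cg {M : Type*} [CommMonoid M] (g : ι → Bool) (z : M) :
    (∏ i, (if g i then z else 1)) = z ^ cg g := by
  rw [cg, ← Finset.prod_filter_mul_prod_filter_not Finset.univ (fun i => g i = true)]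
  rw [Finset.prod_congr rfl (fun i hi => if_pos (Finset.mem_filter.mp hi).2),
      Finset.prod_congr rfl (fun i hi => if_neg (by simpa using (Finset.mem_filter.mp hi).2)),
      Finset.prod_const, Finset.prod_const, one_pow, mul_one]

lemma kapT_diag_mδ0 (g : ι → Bool) : kapT q (mδ0 g) (mδ0 g) = (q : ℤ) ^ cg g := by
  rw [kapT, Finset.prod_congr rfl (fun i _ => show kap q (mδ0 g i) (mδ0 g i) =
      if g i then (q:ℤ) else 1 by rcases hg : g i <;> simp [kap, mδ0, hg])]
  exact prod_pow_cg g _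

theorem key_fwd (hq : ¬ IsSquare q) (b : BB q ι) (hb : b * b = ((q : ℕ) : BB q ι)) :
    ∃ (d : ι) (s : ℤ), (s = 1 ∨ s = -1) ∧ ∃ f : BB q ι, b = s • TB q d + f * XB q d := by
  classical
  have hqZ : ((q:ℕ) : ℤ) ≠ 0 := Int.natCast_ne_zero.mpr (q_ne_zero hq)
  -- Step 1: diagonal coefficient identity
  have hdiag : ∑ g : ι → Bool, (q : ℤ) ^ cg g * b (mδ0 g) ^ 2 = (q : ℤ) := by
    have h0 : (b * b) mOne = (q : ℤ) := by
      rw [hb, natCast_apply, if_pos rfl]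
    rw [mul_apply] at h0
    have h1 : ∑ u : ι → JJ, kapT q u (mA u mOne) * b u * b (mA u mOne)
        = ∑ g : ι → Bool, (q : ℤ) ^ cg g * b (mδ0 g) ^ 2 := by
      rw [← Equiv.sum_comp (EE (ι := ι)) (fun u => kapT q u (mA u mOne) * b u * b (mA u mOne)),
        Fintype.sum_prod_type]
      refine Finset.sum_congr rfl fun g _ => ?_
      rw [Finset.sum_eq_single (fun _ => false)]
      · rw [show EE (g, fun _ => false) = mδ0 g from rfl, mA_one_right, kapT_diag_mδ0]; ring
      · intro δ _ hδ
        obtain ⟨i, hi⟩ := Function.ne_iff.mp hδ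
        rw [mA_one_right]
        have hz : kapT q (EE (g, δ)) (EE (g, δ)) = 0 := by
          refine Finset.prod_eq_zero (Finset.mem_univ i) (kap_xx _ _ ?_ ?_) <;>
            · show (EE (g, δ) i).2 = true
              simp only [EE, Equiv.coe_fn_mk]; simpa using hi
        rw [hz]; ring
      · intro hh; exact absurd (Finset.mem_univ _) hh
    rw [← h1]; exact h0
  -- Step 2: sum of squares over singletons equals one
  have hset : ∑ g : ι → Bool, (if cg g = 1 then b (mδ0 g) ^ 2 else 0) = 1 := by
    have h1 : ∑ g : ι → Bool, (q:ℤ) ^ cg g * b (mδ0 g) ^ 2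
        = (q:ℤ) * ∑ g : ι → Bool, (if cg g = 1 then b (mδ0 g) ^ 2 else 0) := by
      rw [Finset.mul_sum]
      refine Finset.sum_congr rfl fun g _ => ?_
      by_cases hcg : cg g = 1
      · rw [hcg, if_pos rfl, pow_one]
      · rw [if_neg hcg, coeff_vanish hq b hb g hcg]; ring
    rw [h1] at hdiag
    have := hdiag.trans (mul_one (q:ℤ)).symm
    exact mul_left_cancel₀ hqZ this
  -- Step 3: extract the distinguished coordinate
  have hex : ∃ g₀ : ι → Bool, (if cg g₀ = 1 then b (mδ0 g₀) ^ 2 else 0) ≠ 0 := by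
    by_contra hno
    push_neg at hno
    rw [Finset.sum_eq_zero (fun g _ => hno g)] at hset
    exact one_ne_zero hset.symm
  obtain ⟨g₀, hg₀ne⟩ := hex
  have hcg₀ : cg g₀ = 1 := by
    by_contra hcg; rw [if_neg hcg] at hg₀ne; exact hg₀ne rfl
  rw [if_pos hcg₀] at hg₀ne
  have hterm_nonneg : ∀ g : ι → Bool,
      0 ≤ (if cg g = 1 then b (mδ0 g) ^ 2 else 0) := by
    intro g; by_cases hcg : cg g = 1 <;> simp [hcg, sq_nonneg]
  have hsplit := (Finset.add_sum_erase Finset.univ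
    (fun g => (if cg g = 1 then b (mδ0 g) ^ 2 else 0)) (Finset.mem_univ g₀)).symm
  have herase_nonneg : 0 ≤ ∑ g ∈ Finset.univ.erase g₀,
      (if cg g = 1 then b (mδ0 g) ^ 2 else 0) :=
    Finset.sum_nonneg fun g _ => hterm_nonneg g
  have hg₀_ge : 1 ≤ b (mδ0 g₀) ^ 2 := by
    have h1 : 1 ≤ |b (mδ0 g₀)| := Int.one_le_abs (by
      intro h; rw [h] at hg₀ne; simp at hg₀ne)
    nlinarith [sq_abs (b (mδ0 g₀))]
  have hsq1 : b (mδ0 g₀) ^ 2 = 1 ∧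
      ∑ g ∈ Finset.univ.erase g₀, (if cg g = 1 then b (mδ0 g) ^ 2 else 0) = 0 := by
    rw [hset, if_pos hcg₀] at hsplit
    constructor <;> linarith
  have hrest : ∀ g : ι → Bool, g ≠ g₀ → cg g = 1 → b (mδ0 g) = 0 := by
    intro g hgne hcg
    have := (Finset.sum_eq_zero_iff_of_nonneg fun g _ => hterm_nonneg g).mp hsq1.2 g
      (Finset.mem_erase.mpr ⟨hgne, Finset.mem_univ g⟩)
    rw [if_pos hcg] at this
    exact pow_eq_zero_iff (n := 2) (by norm_num) |>.mp this
  set s : ℤ := b (mδ0 g₀) with hs_def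
  have hs : s = 1 ∨ s = -1 :=
    Int.isUnit_iff.mp (IsUnit.of_mul_eq_one (a := s) s (by nlinarith [hsq1.1]))
  obtain ⟨d, hd⟩ := Finset.card_eq_one.mp hcg₀
  have hg₀d : ∀ i, g₀ i = true ↔ i = d := by
    intro i
    constructor
    · intro hi
      have : i ∈ Finset.univ.filter (fun i => g₀ i = true) := by
        simp [hi]
      rw [hd] at this; simpa using this
    · intro hi
      have : i ∈ Finset.univ.filter (fun j => g₀ j = true) := by
        rw [hd, Finset.mem_singleton]; exact hi
      simpa using this
  -- Step 4: all x-free coefficients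
  have hδ0 : ∀ m : ι → JJ, (∀ i, (m i).2 = false) → b m = if m = mT d then s else 0 := by
    intro m hm
    set g : ι → Bool := fun i => (m i).1 with hg_def
    have hmg : m = mδ0 g := by
      funext i; rw [mδ0]; exact Prod.ext rfl (hm i)
    have hmT_iff : m = mT d ↔ g = g₀ := by
      constructor
      · intro hmd
        funext i
        have : (m i).1 = (mT d i).1 := by rw [hmd]
        show (m i).1 = g₀ i
        by_cases hi : i = d
        · subst hi; rw [this]; simp [mT, jt, (hg₀d i).mpr rfl]
        · rw [this]; simp [mT, hi, j1]
          
          rcases hgi : g₀ i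
          · rfl
          · exact absurd ((hg₀d i).mp hgi) hi
      · intro hgg
        rw [hmg, hgg]
        funext i
        by_cases hi : i = d
        · subst hi; simp [mδ0, mT, (hg₀d i).mpr rfl, jt]
        · have : g₀ i = false := by
            rcases hgi : g₀ i
            · rfl
            · exact absurd ((hg₀d i).mp hgi) hi
          simp [mδ0, mT, hi, this, j1]
    by_cases hgg : g = g₀
    · rw [if_pos (hmT_iff.mpr hgg), hmg, hgg, hs_def]
    · rw [if_neg (fun hh => hgg (hmT_iff.mp hh)), hmg]
      by_cases hcg : cg g = 1
      · exact hrest g hgg hcg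
      · exact coeff_vanish hq b hb g hcg
  -- Step 5: the error term
  set e : BB q ι := b - s • TB q d with he_def
  have hbe : s • TB q d + e = b := by rw [he_def]; abel
  have he0 : ∀ m : ι → JJ, (∀ i, (m i).2 = false) → e m = 0 := by
    intro m hm
    rw [he_def, sub_apply, zsmul_apply, hδ0 m hm, TB, bE_apply]
    by_cases hmd : m = mT d <;> simp [hmd]
  have hss : s * s = 1 := by rcases hs with h | h <;> rw [h] <;> norm_num
  have hz : s • (TB q d * e) + (s • (e * TB q d) + e * e) = 0 := by
    have h2 : (s • TB q d + e) * (s • TB q d + e) = ((q:ℕ) : BB q ι) := by rw [hbe]; exact hb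
    rw [add_mul, mul_add, mul_add, smul_mul_assoc, smul_mul_assoc, mul_smul_comm, mul_smul_comm,
      smul_smul, hss, one_smul, TB_mul_TB] at h2
    have h5 : ((q:ℕ) : BB q ι) + (s • (TB q d * e) + (s • (e * TB q d) + e * e))
        = ((q:ℕ) : BB q ι) + 0 := by
      rw [add_zero]; conv_rhs => rw [← h2]
      abel
    exact add_left_cancel h5
  have hEq : ∀ m : ι → JJ,
      (TB q d * e) m + (e * TB q d) m + s * (e * e) m = 0 := by
    intro m
    have hm := congrFun hz m
    simp only [add_apply, zsmul_apply, zero_apply] at hm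
    linear_combination s * hm - ((TB q d * e) m + (e * TB q d) m) * hss
  -- Step 6: induction on the number of x's
  have hj2' : ∀ j : JJ, (jA jt j).2 = j.2 := by rintro ⟨a, c⟩; cases a <;> cases c <;> rfl
  have hx2' : ∀ (u m' : ι → JJ) (i : ι), ((mA u m') i).2 = xor ((u i).2) ((m' i).2) := by
    intro u m' i
    rcases hu : u i with ⟨a, c⟩; rcases hm : m' i with ⟨a', c'⟩
    simp [mA, hu, hm, jA]
  have hmain : ∀ K : ℕ, ∀ m : ι → JJ,
      (Finset.univ.filter (fun i => (m i).2 = true)).card = K → (m d).2 = false → e m = 0 := by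
    intro K
    induction K using Nat.strong_induction_on with
    | _ K IH =>
      intro m hK hmd
      set m' : ι → JJ := mA (mT d) m with hm'_def
      have hm'2 : ∀ i, (m' i).2 = (m i).2 := by
        intro i
        rw [hm'_def, show (mA (mT d) m) i = if i = d then jA jt (m i) else m i from mA_mT_apply d m i]
        by_cases hi : i = d <;> simp [hi, hj2']
      have hmm' : mA (mT d) m' = m := by rw [hm'_def, mA_cancel]
      have hTe : (TB q d * e) m' = kap q jt (m d) * e m := by
        rw [TB, mul_bE_left, kapT_mT_left, hmm']
      have heT : (e * TB q d) m' = kap q (m d) jt * e m := by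
        rw [TB, mul_bE_right, hmm', kapT_mT_right]
      have hee : (e * e) m' = 0 := by
        rw [mul_apply]
        refine Finset.sum_eq_zero fun u _ => ?_
        by_cases hov : ∃ i, (u i).2 = true ∧ ((mA u m') i).2 = true
        · obtain ⟨i, hi1, hi2⟩ := hov
          rw [show kapT q u (mA u m') = 0 from
            Finset.prod_eq_zero (Finset.mem_univ i) (kap_xx _ _ hi1 hi2)]
          ring
        · push_neg at hov
          have hsub : ∀ i, (u i).2 = true → (m i).2 = true := by
            intro i hi
            have h2 := hov i hi
            rw [hx2' u m' i, hi, hm'2 i] at h2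
            rcases hmi : (m i).2
            · rw [hmi] at h2; simp at h2
            · rfl
          by_cases hK0 : (Finset.univ.filter (fun i => (u i).2 = true)).card = 0
          · have : ∀ i, (u i).2 = false := by
              intro i
              rcases hui : (u i).2
              · rfl
              · exfalso
                have : i ∈ Finset.univ.filter (fun i => (u i).2 = true) := by simp [hui]
                rw [Finset.card_eq_zero.mp hK0] at this
                simp at this
            rw [he0 u this]; ring
          · have hsubset : Finset.univ.filter (fun i => (u i).2 = true) ⊆
                Finset.univ.filter (fun i => (m i).2 = true) := by
              intro i hi
              simp only [Finset.mem_filter, Finset.mem_univ, true_and] at hi ⊢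
              exact hsub i hi
            by_cases hKK : (Finset.univ.filter (fun i => (u i).2 = true)).card = K
            · have hfeq : Finset.univ.filter (fun i => (u i).2 = true) =
                  Finset.univ.filter (fun i => (m i).2 = true) :=
                Finset.eq_of_subset_of_card_le hsubset (by rw [hK, hKK])
              have humeq : ∀ i, (u i).2 = (m i).2 := by
                intro i
                rcases hmi : (m i).2
                · rcases hui : (u i).2
                  · rfl
                  · exfalso
                    have : i ∈ Finset.univ.filter (fun i => (m i).2 = true) := by
                      rw [← hfeq]; simp [hui]
                    simp [hmi] at this
                · rcases hui : (u i).2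
                  · exfalso
                    have : i ∈ Finset.univ.filter (fun i => (u i).2 = true) := by
                      rw [hfeq]; simp [hmi]
                    simp [hui] at this
                  · rfl
              have : ∀ i, ((mA u m') i).2 = false := by
                intro i; rw [hx2' u m' i, hm'2 i, humeq i]
                rcases hmi : (m i).2 <;> simp
              rw [he0 _ this]; ring
            · have hlt : (Finset.univ.filter (fun i => (u i).2 = true)).card < K := by
                have := Finset.card_le_card hsubset
                rw [hK] at this
                omega
              have hud : (u d).2 = false := by
                rcases hud : (u d).2
                · rfl
                · exact absurd (hsub d hud) (by rw [hmd]; simp)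
              rw [IH _ hlt u rfl hud]; ring
      have heq := hEq m'
      rw [hTe, heT, hee, mul_zero, add_zero] at heq
      have hkap : kap q jt (m d) = kap q (m d) jt ∧ kap q jt (m d) ≠ 0 := by
        rcases hj : m d with ⟨a, c⟩
        have : c = false := by rw [hj] at hmd; exact hmd
        subst this
        cases a <;> constructor <;> simp [kap, jt] <;> exact_mod_cast q_ne_zero hq
      rcases hkap with ⟨hk1, hk2⟩
      rw [← hk1] at heq
      have : kap q jt (m d) * (2 * e m) = 0 := by linarith
      rcases mul_eq_zero.mp this with h | h
      · exact absurd h hk2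
      · linarith
  -- Step 7: assemble
  refine ⟨d, s, hs, (show BB q ι from fun m => e (mA (mX d) m)), ?_⟩
  have hfx : (show BB q ι from fun m => e (mA (mX d) m)) * XB q d = e := by
    funext m
    rw [mul_XB_apply]
    rcases hmd : (m d).2
    · simp only [hmd, Bool.false_eq_true, if_false]
      exact (hmain _ m rfl hmd).symm
    · simp only [hmd, if_true, mA_cancel]
  rw [hfx, hbe]
end BB

---- the slot ring and the coefficient map ----

/-- the slot model: `BB q Unit` -/
abbrev SS (q : ℕ) : Type := BB q Unit

def tS (q : ℕ) : SS q := BB.bE (fun _ => jt)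
def xS (q : ℕ) : SS q := BB.bE (fun _ => jx)

namespace Amodel
open BB

lemma kapT_unit (q : ℕ) (u v : Unit → JJ) : kapT q u v = kap q (u ()) (v ()) := by
  rw [kapT]; exact Fintype.prod_unique _

lemma constfun_eq (j j' : JJ) : ((fun _ : Unit => j) = (fun _ : Unit => j')) ↔ j = j' :=
  ⟨fun h => congrFun h (), fun h => by rw [h]⟩

lemma mOne_unit : (mOne : Unit → JJ) = fun _ => j1 := rfl

lemma tS_mul_tS (q : ℕ) : tS q * tS q = ((q : ℕ) : SS q) := by
  rw [tS, bE_mul_bE]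
  funext m
  rw [zsmul_apply, BB.natCast_apply, bE_apply, kapT_unit]
  have h1 : kap q jt jt = (q : ℤ) := kap_jt_jt
  have h2 : mA (fun _ : Unit => jt) (fun _ => jt) = mOne := by
    funext i; simp [mA, mOne]
  rw [h1, h2]
  by_cases hm : m = mOne <;> simp [hm]

lemma tS_mul_xS (q : ℕ) : tS q * xS q = BB.bE (fun _ => jtx) := by
  rw [tS, xS, bE_mul_bE]
  have h1 : kapT q (fun _ : Unit => jt) (fun _ => jx) = 1 := by
    rw [kapT_unit]; simp [kap, jt, jx]
  have h2 : mA (fun _ : Unit => jt) (fun _ => jx) = fun _ => jtx := by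
    funext i; simp [mA, jA, jt, jx, jtx]
  rw [h1, h2, one_smul]

lemma xS_mul_tS (q : ℕ) : xS q * tS q = -BB.bE (fun _ => jtx) := by
  rw [tS, xS, bE_mul_bE]
  have h1 : kapT q (fun _ : Unit => jx) (fun _ => jt) = -1 := by
    rw [kapT_unit]; simp [kap, jt, jx]
  have h2 : mA (fun _ : Unit => jx) (fun _ => jt) = fun _ => jtx := by
    funext i; simp [mA, jA, jt, jx, jtx]
  rw [h1, h2]
  exact neg_one_zsmul _

lemma xS_mul_xS (q : ℕ) : xS q * xS q = 0 := by
  rw [xS, bE_mul_bE]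
  have h1 : kapT q (fun _ : Unit => jx) (fun _ => jx) = 0 := by
    rw [kapT_unit]; simp [kap, jx]
  rw [h1, zero_smul]

/-- the free algebra map to the slot model -/
def FF (q : ℕ) : FreeTwo →ₐ[ℤ] SS q :=
  FreeAlgebra.lift ℤ (fun i : Fin 2 => if i = 0 then tS q else xS q)

lemma FF_rel (q : ℕ) : ∀ ⦃x y : FreeTwo⦄, ARel q x y → FF q x = FF q y := by
  intro x y h
  cases h with
  | t_sq =>
    rw [map_mul, map_natCast, FF, FreeAlgebra.lift_ι_apply, if_pos rfl]
    exact tS_mul_tS q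
  | t_x =>
    rw [map_mul, map_neg, map_mul, FF, FreeAlgebra.lift_ι_apply, FreeAlgebra.lift_ι_apply,
      if_pos rfl, if_neg (by decide), tS_mul_xS, xS_mul_tS, neg_neg]
  | x_sq =>
    rw [map_mul, map_zero, FF, FreeAlgebra.lift_ι_apply, if_neg (by decide)]
    exact xS_mul_xS q

/-- the coefficient algebra map `A q → SS q` -/
def psi (q : ℕ) : A q →ₐ[ℤ] SS q := RingQuot.liftAlgHom ℤ ⟨FF q, FF_rel q⟩

lemma psi_tA (q : ℕ) : psi q (tA q) = tS q := by
  rw [tA, ← RingQuot.mkAlgHom_coe ℤ]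
  show psi q (RingQuot.mkAlgHom ℤ (ARel q) (FreeAlgebra.ι ℤ (0 : Fin 2))) = tS q
  show (RingQuot.liftAlgHom ℤ ⟨FF q, FF_rel q⟩ : RingQuot (ARel q) →ₐ[ℤ] SS q)
      (RingQuot.mkAlgHom ℤ (ARel q) (FreeAlgebra.ι ℤ (0 : Fin 2))) = _
  rw [RingQuot.liftAlgHom_mkAlgHom_apply, FF, FreeAlgebra.lift_ι_apply, if_pos rfl]

lemma psi_xA (q : ℕ) : psi q (xA q) = xS q := by
  rw [xA, ← RingQuot.mkAlgHom_coe ℤ]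
  show psi q (RingQuot.mkAlgHom ℤ (ARel q) (FreeAlgebra.ι ℤ (1 : Fin 2))) = xS q
  show (RingQuot.liftAlgHom ℤ ⟨FF q, FF_rel q⟩ : RingQuot (ARel q) →ₐ[ℤ] SS q)
      (RingQuot.mkAlgHom ℤ (ARel q) (FreeAlgebra.ι ℤ (1 : Fin 2))) = _
  rw [RingQuot.liftAlgHom_mkAlgHom_apply, FF, FreeAlgebra.lift_ι_apply, if_neg (by decide)]

/-- coefficients of an element of `A q` -/
def co (q : ℕ) (a : A q) (j : JJ) : ℤ := psi q a (fun _ => j)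

lemma co_add (q : ℕ) (a b : A q) (j : JJ) : co q (a + b) j = co q a j + co q b j := by
  rw [co, co, co, map_add]; rfl

lemma co_zsmul (q : ℕ) (z : ℤ) (a : A q) (j : JJ) : co q (z • a) j = z * co q a j := by
  rw [co, co, map_zsmul]
  exact zsmul_apply z (psi q a) _

lemma co_one (q : ℕ) (j : JJ) : co q (1 : A q) j = if j = j1 then 1 else 0 := by
  rw [co, map_one, one_apply, mOne_unit]
  by_cases hj : j = j1
  · rw [if_pos ((constfun_eq j j1).mpr hj), if_pos hj]
  · rw [if_neg (fun h => hj ((constfun_eq j j1).mp h)), if_neg hj]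

lemma co_tA (q : ℕ) (j : JJ) : co q (tA q) j = if j = jt then 1 else 0 := by
  rw [co, psi_tA, tS, bE_apply]
  by_cases hj : j = jt
  · rw [if_pos ((constfun_eq j jt).mpr hj), if_pos hj]
  · rw [if_neg (fun h => hj ((constfun_eq j jt).mp h)), if_neg hj]

lemma co_xA (q : ℕ) (j : JJ) : co q (xA q) j = if j = jx then 1 else 0 := by
  rw [co, psi_xA, xS, bE_apply]
  by_cases hj : j = jx
  · rw [if_pos ((constfun_eq j jx).mpr hj), if_pos hj]
  · rw [if_neg (fun h => hj ((constfun_eq j jx).mp h)), if_neg hj]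

lemma co_txA (q : ℕ) (j : JJ) : co q (tA q * xA q) j = if j = jtx then 1 else 0 := by
  rw [co, map_mul, psi_tA, psi_xA, tS_mul_xS, bE_apply]
  by_cases hj : j = jtx
  · rw [if_pos ((constfun_eq j jtx).mpr hj), if_pos hj]
  · rw [if_neg (fun h => hj ((constfun_eq j jtx).mp h)), if_neg hj]

lemma co_intCast (q : ℕ) (z : ℤ) (j : JJ) :
    co q ((z : ℤ) : A q) j = if j = j1 then z else 0 := by
  rw [co, map_intCast, BB.intCast_apply, mOne_unit]
  by_cases hj : j = j1
  · rw [if_pos ((constfun_eq j j1).mpr hj), if_pos hj]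
  · rw [if_neg (fun h => hj ((constfun_eq j j1).mp h)), if_neg hj]

lemma co_mul (q : ℕ) (a b : A q) (j : JJ) :
    co q (a * b) j = ∑ v : JJ, kap q v (jA v j) * co q a v * co q b (jA v j) := by
  rw [co, map_mul, mul_apply]
  refine (Fintype.sum_equiv (Equiv.funUnique Unit JJ).symm
    (fun v => kap q v (jA v j) * co q a v * co q b (jA v j))
    (fun u => kapT q u (mA u (fun _ => j)) * psi q a u * psi q b (mA u (fun _ => j)))
    (fun v => ?_)).symm
  rw [kapT_unit]
  rfl

end Amodel

namespace Amodel
open BB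

/-- monomial basis of `A q` -/
def mon (q : ℕ) (j : JJ) : A q :=
  if j.1 then (if j.2 then tA q * xA q else tA q) else (if j.2 then xA q else 1)

lemma hAtt (q : ℕ) : tA q * tA q = ((q : ℕ) : A q) := by
  have h := RingQuot.mkRingHom_rel ARel.t_sq (r := ARel q)
  rwa [map_mul, map_natCast] at h

lemma hAtx (q : ℕ) : tA q * xA q = -(xA q * tA q) := by
  have h := RingQuot.mkRingHom_rel ARel.t_x (r := ARel q)
  rwa [map_mul, map_neg, map_mul] at h

lemma hAxx (q : ℕ) : xA q * xA q = 0 := by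
  have h := RingQuot.mkRingHom_rel ARel.x_sq (r := ARel q)
  rwa [map_mul, map_zero] at h

lemma hAxt (q : ℕ) : xA q * tA q = -(tA q * xA q) := by rw [hAtx, neg_neg]

lemma qA_smul (q : ℕ) : ((q : ℕ) : A q) = ((q : ℕ) : ℤ) • (1 : A q) := by
  rw [zsmul_eq_mul, mul_one, Int.cast_natCast]

lemma co_mon (q : ℕ) (j j' : JJ) : co q (mon q j) j' = if j' = j then 1 else 0 := by
  rcases j with ⟨a, b⟩
  cases a <;> cases b
  · rw [show mon q (false, false) = 1 from rfl, co_one]; rfl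
  · rw [show mon q (false, true) = xA q from rfl, co_xA]; rfl
  · rw [show mon q (true, false) = tA q from rfl, co_tA]; rfl
  · rw [show mon q (true, true) = tA q * xA q from rfl, co_txA]; rfl

lemma hxtx (q : ℕ) : xA q * (tA q * xA q) = 0 := by
  rw [← mul_assoc, hAxt]
  calc -(tA q * xA q) * xA q = -((tA q * xA q) * xA q) := neg_mul (tA q * xA q) (xA q)
  _ = 0 := by rw [mul_assoc, hAxx, mul_zero, neg_zero]

lemma mon_mul (q : ℕ) (j j' : JJ) :
    mon q j * mon q j' = kap q j j' • mon q (jA j j') := by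
  rcases j with ⟨a, b⟩; rcases j' with ⟨c, d⟩
  cases a <;> cases b <;> cases c <;> cases d <;> simp only [mon, jA, kap] <;> norm_num
  · exact hAxx q
  · exact hAxt q
  · exact hxtx q
  · exact hAtt q
  · rw [← mul_assoc, hAtt]
  · rw [mul_assoc, hAxx, mul_zero]
  · rw [mul_assoc, hAxt]
    calc tA q * -(tA q * xA q) = -(tA q * (tA q * xA q)) := mul_neg (tA q) (tA q * xA q)
    _ = -(((q:ℕ) : A q) * xA q) := by rw [← mul_assoc, hAtt]
  · rw [mul_assoc, hxtx, mul_zero]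

end Amodel

namespace Amodel
open BB

lemma sum_ind_smul (q : ℕ) (j0 : JJ) (r : ℤ) :
    ∑ j : JJ, (if j = j0 then r else 0) • mon q j = r • mon q j0 := by
  rw [Finset.sum_eq_single j0]
  · rw [if_pos rfl]
  · intro j _ hj; rw [if_neg hj, zero_smul]
  · intro h; exact absurd (Finset.mem_univ _) h

lemma decomp_mul (q : ℕ) (ya yb : A q)
    (ha : ∑ j : JJ, co q ya j • mon q j = ya)
    (hb : ∑ j : JJ, co q yb j • mon q j = yb) :
    ∑ j : JJ, co q (ya * yb) j • mon q j = ya * yb := by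
  conv_rhs => rw [← ha, ← hb]
  rw [Finset.sum_mul_sum]
  have hterm : ∀ j j' : JJ, (co q ya j • mon q j) * (co q yb j' • mon q j')
      = (kap q j j' * co q ya j * co q yb j') • mon q (jA j j') := by
    intro j j'
    rw [smul_mul_assoc, mul_smul_comm, smul_smul, mon_mul, smul_smul]
    congr 1; ring
  rw [Finset.sum_congr rfl fun j (_ : j ∈ Finset.univ) =>
    Finset.sum_congr rfl fun j' (_ : j' ∈ Finset.univ) => hterm j j']
  rw [Finset.sum_congr rfl fun j'' (_ : j'' ∈ Finset.univ) => by
    rw [co_mul, Finset.sum_smul]]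
  rw [← Fintype.sum_prod_type', ← Fintype.sum_prod_type']
  refine Fintype.sum_equiv ⟨fun p : JJ × JJ => (p.2, jA p.2 p.1), fun p => (jA p.1 p.2, p.1),
    ?_, ?_⟩ _ _ ?_
  · rintro ⟨j'', v⟩; simp
  · rintro ⟨j, j'⟩; simp
  · rintro ⟨j'', v⟩
    simp only [Equiv.coe_fn_mk]
    rw [jA_cancel]

lemma decomp (q : ℕ) (y : A q) : ∑ j : JJ, co q y j • mon q j = y := by
  obtain ⟨z, rfl⟩ := RingQuot.mkRingHom_surjective (ARel q) y
  induction z using FreeAlgebra.induction with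
  | grade0 r =>
    have h1 : RingQuot.mkRingHom (ARel q) (algebraMap ℤ FreeTwo r) = ((r : ℤ) : A q) := by
      rw [show algebraMap ℤ FreeTwo r = ((r : ℤ) : FreeTwo) by
        exact eq_intCast _ r, map_intCast]
    rw [h1, Finset.sum_congr rfl fun j (_ : j ∈ Finset.univ) => by rw [co_intCast],
      sum_ind_smul, show mon q j1 = 1 from rfl, zsmul_eq_mul, mul_one]
  | grade1 i =>
    fin_cases i
    · show ∑ j : JJ, co q (tA q) j • mon q j = tA q
      rw [Finset.sum_congr rfl fun j (_ : j ∈ Finset.univ) => by rw [co_tA],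
        sum_ind_smul, one_smul]
      rfl
    · show ∑ j : JJ, co q (xA q) j • mon q j = xA q
      rw [Finset.sum_congr rfl fun j (_ : j ∈ Finset.univ) => by rw [co_xA],
        sum_ind_smul, one_smul]
      rfl
  | mul a b iha ihb =>
    rw [map_mul]
    exact decomp_mul q _ _ iha ihb
  | add a b iha ihb =>
    rw [map_add, Finset.sum_congr rfl fun j (_ : j ∈ Finset.univ) => by rw [co_add, add_smul],
      Finset.sum_add_distrib, iha, ihb]

end Amodel

open BB Amodel


/-- the coefficient multilinear map -/
def ML (q n : ℕ) : MultilinearMap ℤ (fun _ : Fin n => A q) (BB q (Fin n)) where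
  toFun a := fun m => ∏ i, co q (a i) (m i)
  map_update_add' a k x y := by
    funext m
    show (∏ i, co q (Function.update a k (x + y) i) (m i))
      = (∏ i, co q (Function.update a k x i) (m i))
        + ∏ i, co q (Function.update a k y i) (m i)
    have key : ∀ (v : A q) (i : Fin n), co q (Function.update a k v i) (m i)
        = Function.update (fun i => co q (a i) (m i)) k (co q v (m k)) i := by
      intro v i
      by_cases hi : i = k
      · subst hi; simp
      · simp [Function.update_of_ne hi]
    rw [Finset.prod_congr rfl fun i _ => key (x + y) i,
        Finset.prod_congr rfl fun i _ => key x i,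
        Finset.prod_congr rfl fun i _ => key y i,
        Finset.prod_update_of_mem (Finset.mem_univ k),
        Finset.prod_update_of_mem (Finset.mem_univ k),
        Finset.prod_update_of_mem (Finset.mem_univ k),
        co_add, add_mul]
  map_update_smul' a k c x := by
    funext m
    show (∏ i, co q (Function.update a k (c • x) i) (m i))
      = c * ∏ i, co q (Function.update a k x i) (m i)
    have key : ∀ (v : A q) (i : Fin n), co q (Function.update a k v i) (m i)
        = Function.update (fun i => co q (a i) (m i)) k (co q v (m k)) i := by
      intro v i
      by_cases hi : i = k
      · subst hi; simp
      · simp [Function.update_of_ne hi]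
    rw [Finset.prod_congr rfl fun i _ => key (c • x) i,
        Finset.prod_congr rfl fun i _ => key x i,
        Finset.prod_update_of_mem (Finset.mem_univ k),
        Finset.prod_update_of_mem (Finset.mem_univ k),
        co_zsmul, mul_assoc]

lemma ML_one (q n : ℕ) : ML q n 1 = 1 := by
  funext m
  show (∏ i, co q ((1 : Fin n → A q) i) (m i)) = (1 : BB q (Fin n)) m
  rw [one_apply]
  by_cases hm : m = mOne
  · subst hm
    rw [if_pos rfl]
    exact Finset.prod_eq_one fun i _ => by rw [show (1 : Fin n → A q) i = 1 from rfl, co_one, show (mOne i : JJ) = j1 from rfl, if_pos rfl]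
  · rw [if_neg hm]
    obtain ⟨i, hi⟩ := Function.ne_iff.mp hm
    refine Finset.prod_eq_zero (Finset.mem_univ i) ?_
    rw [show (1 : Fin n → A q) i = 1 from rfl, co_one]
    exact if_neg hi

lemma ML_mul (q n : ℕ) (a b : Fin n → A q) : ML q n (a * b) = ML q n a * ML q n b := by
  funext m
  show (∏ i, co q (a i * b i) (m i)) = (ML q n a * ML q n b) m
  rw [mul_apply]
  rw [Finset.prod_congr rfl fun i (_ : i ∈ Finset.univ) => co_mul q (a i) (b i) (m i)]
  rw [Fintype.prod_sum (fun (i : Fin n) (v : JJ) =>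
    kap q v (jA v (m i)) * co q (a i) v * co q (b i) (jA v (m i)))]
  refine Finset.sum_congr rfl fun u _ => ?_
  rw [Finset.prod_mul_distrib, Finset.prod_mul_distrib]
  rfl

/-- the comparison algebra map -/
def Phi (q n : ℕ) : Tpow q n →ₐ[ℤ] BB q (Fin n) :=
  PiTensorProduct.liftAlgHom (ML q n) (ML_one q n) (ML_mul q n)

lemma Phi_tprod (q n : ℕ) (a : Fin n → A q) :
    Phi q n (PiTensorProduct.tprod ℤ a) = fun m => ∏ i, co q (a i) (m i) := by
  show (PiTensorProduct.lift (ML q n)) (PiTensorProduct.tprod ℤ a) = _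
  rw [PiTensorProduct.lift.tprod]
  rfl

lemma prod_ind (q n : ℕ) (m' m : Fin n → JJ) :
    (∏ i, if m' i = m i then (1:ℤ) else 0) = if m' = m then 1 else 0 := by
  by_cases h : m' = m
  · subst h
    rw [if_pos rfl]
    exact Finset.prod_eq_one fun i _ => if_pos rfl
  · rw [if_neg h]
    obtain ⟨i, hi⟩ := Function.ne_iff.mp h
    exact Finset.prod_eq_zero (Finset.mem_univ i) (if_neg hi)

lemma Phi_mon (q n : ℕ) (m : Fin n → JJ) :
    Phi q n (PiTensorProduct.tprod ℤ (fun i => mon q (m i))) = bE m := by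
  rw [Phi_tprod]
  funext m'
  rw [bE_apply, ← prod_ind q n m' m]
  exact Finset.prod_congr rfl fun i _ => co_mon q (m i) (m' i)

/-- the inverse map -/
def rho (q n : ℕ) (g : BB q (Fin n)) : Tpow q n :=
  ∑ m : Fin n → JJ, g m • PiTensorProduct.tprod ℤ (fun i => mon q (m i))

lemma Phi_rho (q n : ℕ) (g : BB q (Fin n)) : Phi q n (rho q n g) = g := by
  rw [rho, map_sum]
  rw [Finset.sum_congr rfl fun m (_ : m ∈ Finset.univ) => by
    rw [map_smul, Phi_mon]]
  funext m'
  show (∑ m : Fin n → JJ, g m • (bE m : BB q (Fin n))) m' = g m'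
  have : ∀ m : Fin n → JJ, (g m • (bE m : BB q (Fin n))) m' = if m' = m then g m else 0 := by
    intro m
    rw [show (g m • (bE m : BB q (Fin n))) m' = g m * bE m m' from zsmul_apply _ _ _, bE_apply]
    by_cases h : m' = m <;> simp [h]
  rw [show (∑ m : Fin n → JJ, g m • (bE m : BB q (Fin n))) m'
      = ∑ m : Fin n → JJ, (g m • (bE m : BB q (Fin n))) m' from Finset.sum_apply _ _ _]
  rw [Finset.sum_congr rfl fun m _ => this m, Finset.sum_eq_single m']
  · rw [if_pos rfl]
  · intro m _ hm; rw [if_neg (fun h => hm h.symm)]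
  · intro h; exact absurd (Finset.mem_univ _) h

lemma rho_add (q n : ℕ) (g h : BB q (Fin n)) :
    rho q n (g + h) = rho q n g + rho q n h := by
  rw [rho, rho, rho, ← Finset.sum_add_distrib]
  exact Finset.sum_congr rfl fun m _ => by rw [BB.add_apply, add_smul]

lemma rho_zsmul (q n : ℕ) (r : ℤ) (g : BB q (Fin n)) :
    rho q n (r • g) = r • rho q n g := by
  rw [rho, rho, Finset.smul_sum]
  exact Finset.sum_congr rfl fun m _ => by
    rw [show (r • g) m = r * g m from zsmul_apply _ _ _, mul_smul]

lemma rho_Phi (q n : ℕ) (z : Tpow q n) : rho q n (Phi q n z) = z := by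
  induction z using PiTensorProduct.induction_on with
  | smul_tprod r a =>
    rw [map_smul, rho_zsmul]
    congr 1
    rw [Phi_tprod]
    conv_rhs => rw [show a = fun i => ∑ j : JJ, co q (a i) j • mon q j from
      funext fun i => (decomp q (a i)).symm]
    rw [MultilinearMap.map_sum]
    refine Finset.sum_congr rfl fun m _ => ?_
    rw [MultilinearMap.map_smul_univ]
  | add x y hx hy =>
    rw [map_add, rho_add, hx, hy]

lemma Phi_inj (q n : ℕ) : Function.Injective (Phi q n) := fun x y hxy => by
  rw [← rho_Phi q n x, hxy, rho_Phi]

lemma Phi_tI (q n : ℕ) (d : Fin n) : Phi q n (tI q n d) = TB q d := by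
  rw [tI, TB]
  have : (fun j => if j = d then tA q else 1) = fun j : Fin n => mon q (mT d j) := by
    funext j
    by_cases hj : j = d <;> simp [mT, mon, hj, jt, j1]
  rw [this, Phi_mon]

lemma Phi_xI (q n : ℕ) (d : Fin n) : Phi q n (xI q n d) = XB q d := by
  rw [xI, XB]
  have : (fun j => if j = d then xA q else 1) = fun j : Fin n => mon q (mX d j) := by
    funext j
    by_cases hj : j = d <;> simp [mX, mon, hj, jx, j1]
  rw [this, Phi_mon]


end

/-- An element `a ∈ A^{⊗ n}` satisfies `a² = q·1` if and only if
`a = ±t_d + f·x_d` for some `d ∈ {1, …, n}` and `f ∈ A^{⊗ n}`. -/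
theorem stmt16 (q : ℕ) (hq : ¬ IsSquare q) (n : ℕ) (hn : 1 ≤ n) (a : Tpow q n) :
    a * a = (q : Tpow q n) ↔
    ∃ (d : Fin n) (s : ℤ), (s = 1 ∨ s = -1) ∧
      ∃ f : Tpow q n, a = s • tI q n d + f * xI q n d := by
  constructor
  · intro h
    have hB : Phi q n a * Phi q n a = ((q : ℕ) : BB q (Fin n)) := by
      rw [← map_mul, h]; exact map_natCast (Phi q n) q
    obtain ⟨d, s, hs, fB, hfB⟩ := BB.key_fwd hq (Phi q n a) hB
    refine ⟨d, s, hs, rho q n fB, ?_⟩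
    apply Phi_inj q n
    rw [map_add, map_mul, map_zsmul, Phi_tI, Phi_xI, Phi_rho]
    exact hfB
  · rintro ⟨d, s, hs, f, rfl⟩
    apply Phi_inj q n
    rw [show Phi q n (q : Tpow q n) = ((q : ℕ) : BB q (Fin n)) from map_natCast (Phi q n) q,
      map_mul, map_add, map_zsmul, map_mul, Phi_tI, Phi_xI]
    exact BB.key_bwd hs (Phi q n f)
end
end
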